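/- arXiv:1208.4823 — 6 statements merged into one kernel-verified Lean document; each statement's English description precedes it below -/
import Mathlib

section
/- Let I_𝕀 be the smallest topologically invariant σ-ideal on ℝ² containing the segment 𝕀 = [0,1]×{0}; it consists of all subsets of countable unions ⋃_{k∈ω} h_k(𝕀) where each h_k : ℝ² → ℝ² is a homeomorphism. Then add(I_𝕀) = ω₁, the first uncountable cardinal. -/
open Set Cardinal

/-- The segment `𝕀 = [0,1] × {0}` in the plane `ℝ²`. -/
def segII : Set (ℝ × ℝ) := Set.Icc (0 : ℝ) 1 ×ˢ ({0} : Set ℝ)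

/-- The smallest topologically invariant σ-ideal on `ℝ²` containing the segment
`𝕀 = [0,1] × {0}`: it consists of all subsets of countable unions
`⋃ₖ hₖ(𝕀)` where each `hₖ` is a homeomorphism of `ℝ²`. -/
def idealII : Set (Set (ℝ × ℝ)) :=
  {A | ∃ h : ℕ → ((ℝ × ℝ) ≃ₜ (ℝ × ℝ)), A ⊆ ⋃ k, (⇑(h k)) '' segII}

/-- The covering number `cov(I)`. -/
noncomputable def covIdeal {X : Type*} (I : Set (Set X)) : Cardinal :=
  sInf {c : Cardinal | ∃ 𝒜 : Set (Set X), 𝒜 ⊆ I ∧ ⋃₀ 𝒜 = Set.univ ∧ Cardinal.mk 𝒜 = c}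

/-- The uniformity number `non(I)`. -/
noncomputable def nonIdeal {X : Type*} (I : Set (Set X)) : Cardinal :=
  sInf {c : Cardinal | ∃ A : Set X, A ∉ I ∧ Cardinal.mk A = c}

/-- The relative additivity `add(I, J)`. -/
noncomputable def addRelIdeal {X : Type*} (I J : Set (Set X)) : Cardinal :=
  sInf {c : Cardinal | ∃ 𝒜 : Set (Set X), 𝒜 ⊆ I ∧ ⋃₀ 𝒜 ∉ J ∧ Cardinal.mk 𝒜 = c}

/-- The additivity `add(I)`. -/
noncomputable def addIdeal {X : Type*} (I : Set (Set X)) : Cardinal := addRelIdeal I I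

/-- The relative cofinality `cof(I, J)`. -/
noncomputable def cofRelIdeal {X : Type*} (I J : Set (Set X)) : Cardinal :=
  sInf {c : Cardinal | ∃ ℬ : Set (Set X), ℬ ⊆ J ∧ (∀ A ∈ I, ∃ B ∈ ℬ, A ⊆ B) ∧
    Cardinal.mk ℬ = c}

/-- The cofinality `cof(I)`. -/
noncomputable def cofIdeal {X : Type*} (I : Set (Set X)) : Cardinal := cofRelIdeal I I

lemma fst_injOn_segII : Set.InjOn Prod.fst segII := by
  rintro ⟨a1, a2⟩ ha ⟨b1, b2⟩ hb h
  simp only [segII, mem_prod, mem_singleton_iff] at ha hb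
  simp only at h
  rw [Prod.mk.injEq]
  exact ⟨h, ha.2.trans hb.2.symm⟩

lemma not_mem_idealII {S : Set ℝ} (hS : ¬ S.Countable) :
    Icc (0 : ℝ) 1 ×ˢ S ∉ idealII := by
  rintro ⟨h, hsub⟩
  set A : ℕ → Set (ℝ × ℝ) := fun k => (⇑(h k)) '' segII with hA
  have hAclosed : ∀ k, IsClosed (A k) := fun k =>
    (h k).isClosedMap _ (isClosed_Icc.prod isClosed_singleton)
  have hAseg : ∀ k, ∀ p ∈ A k, (h k).symm p ∈ segII := by
    rintro k p ⟨q, hq, rfl⟩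
    simpa using hq
  -- Step 1: Baire category
  have key : ∀ y ∈ S, ∃ t : ℕ × ℚ × ℚ, (t.2.1 : ℝ) < (t.2.2 : ℝ) ∧
      Icc (t.2.1 : ℝ) (t.2.2 : ℝ) ×ˢ ({y} : Set ℝ) ⊆ A t.1 := by
    intro y hy
    haveI : Nonempty (Icc (0:ℝ) 1) := ⟨⟨0, le_refl 0, zero_le_one⟩⟩
    set f : ℕ → Set (Icc (0:ℝ) 1) := fun k => {x | ((x : ℝ), y) ∈ A k} with hf
    have hfc : ∀ k, IsClosed (f k) := by
      intro k
      have : Continuous (fun x : Icc (0:ℝ) 1 => ((x : ℝ), y)) := by continuity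
      exact (hAclosed k).preimage this
    have hfU : ⋃ k, f k = Set.univ := by
      ext x
      simp only [mem_iUnion, Set.mem_univ, iff_true]
      have hx : ((x : ℝ), y) ∈ ⋃ k, A k := hsub ⟨x.2, hy⟩
      obtain ⟨i, hi⟩ := mem_iUnion.mp hx
      exact ⟨i, hi⟩
    obtain ⟨k, x0, hx0⟩ := nonempty_interior_of_iUnion_of_closed hfc hfU
    obtain ⟨ε, hε, hball⟩ := Metric.isOpen_iff.mp isOpen_interior x0 hx0
    set c : ℝ := (x0 : ℝ)
    have hc0 : 0 ≤ c := x0.2.1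
    have hc1 : c ≤ 1 := x0.2.2
    set u : ℝ := max 0 (c - ε/2) with hu
    set v : ℝ := min 1 (c + ε/2) with hv
    have huv : u < v := by
      rcases lt_or_eq_of_le hc1 with h1 | h1
      · have : c < v := lt_min h1 (by linarith)
        exact lt_of_le_of_lt (max_le hc0 (by linarith)) this
      · have hv1 : v = 1 := by rw [hv, ← h1]; exact min_eq_left (by linarith)
        rw [hv1]
        exact max_lt zero_lt_one (by rw [← h1]; linarith)
    obtain ⟨q1, hq1u, hq1v⟩ := exists_rat_btwn huv
    obtain ⟨q2, hq21, hq2v⟩ := exists_rat_btwn hq1v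
    refine ⟨(k, q1, q2), hq21, ?_⟩
    rintro ⟨z, w⟩ ⟨hz, hw⟩
    simp only [mem_singleton_iff] at hw
    subst hw
    simp only [mem_Icc] at hz
    have hz0 : (0:ℝ) ≤ z := le_trans (le_trans (le_max_left 0 (c - ε/2)) (le_of_lt hq1u)) hz.1
    have hz1 : z ≤ 1 := le_trans hz.2 (le_trans (le_of_lt hq2v) (min_le_left 1 (c + ε/2)))
    have hzd : dist (⟨z, hz0, hz1⟩ : Icc (0:ℝ) 1) x0 < ε := by
      rw [Subtype.dist_eq, Real.dist_eq, abs_lt]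
      constructor
      · have : c - ε/2 ≤ u := le_max_right 0 (c - ε/2)
        have := le_trans this (le_of_lt hq1u)
        linarith [hz.1]
      · have : v ≤ c + ε/2 := min_le_right 1 (c + ε/2)
        linarith [hz.2, hq2v.le]
    have hm : (⟨z, hz0, hz1⟩ : Icc (0:ℝ) 1) ∈ f k := interior_subset (hball hzd)
    exact hm
  -- Step 2: fibers, pairwise disjoint projections
  set Sfib : ℕ × ℚ × ℚ → Set ℝ := fun t =>
    {y ∈ S | (t.2.1 : ℝ) < (t.2.2 : ℝ) ∧
      Icc (t.2.1 : ℝ) (t.2.2 : ℝ) ×ˢ ({y} : Set ℝ) ⊆ A t.1} with hSfib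
  have hcover : S ⊆ ⋃ t, Sfib t := by
    intro y hy
    obtain ⟨t, ht1, ht2⟩ := key y hy
    exact mem_iUnion.2 ⟨t, hy, ht1, ht2⟩
  have hfibc : ∀ t, (Sfib t).Countable := by
    rintro ⟨k, q1, q2⟩
    set g : ℝ → Set ℝ := fun y =>
      Prod.fst '' ((⇑(h k).symm) '' (Icc (q1:ℝ) (q2:ℝ) ×ˢ ({y} : Set ℝ))) with hg
    have hgseg : ∀ y ∈ Sfib (k, q1, q2),
        (⇑(h k).symm) '' (Icc (q1:ℝ) (q2:ℝ) ×ˢ ({y} : Set ℝ)) ⊆ segII := by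
      rintro y hy p ⟨q, hq, rfl⟩
      exact hAseg k q (hy.2.2 hq)
    have hdisj : (Sfib (k, q1, q2)).PairwiseDisjoint g := by
      intro y hy y' hy' hne
      rw [Function.onFun, Set.disjoint_left]
      rintro z ⟨p, hp, rfl⟩ ⟨p', hp', hpp'⟩
      have hpseg : p ∈ segII := hgseg y hy hp
      have hp'seg : p' ∈ segII := hgseg y' hy' hp'
      have hpe : p = p' := fst_injOn_segII hpseg hp'seg hpp'.symm
      obtain ⟨q, hq, hqe⟩ := hp
      obtain ⟨q', hq', hq'e⟩ := hp'
      have : q = q' := by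
        have := hqe.trans (hpe.trans hq'e.symm)
        exact (h k).symm.injective this
      apply hne
      rw [this] at hq
      exact (hq.2 : q'.2 = y).symm.trans hq'.2
    have hint : ∀ y ∈ Sfib (k, q1, q2), (interior (g y)).Nonempty := by
      intro y hy
      obtain ⟨hyS, hqlt, hsubA⟩ := hy
      have hq12 : (q1:ℝ) ≤ (q2:ℝ) := le_of_lt hqlt
      set p1 : ℝ × ℝ := (h k).symm ((q1:ℝ), y) with hp1
      set p2 : ℝ × ℝ := (h k).symm ((q2:ℝ), y) with hp2
      have hm1 : ((q1:ℝ), y) ∈ Icc (q1:ℝ) (q2:ℝ) ×ˢ ({y} : Set ℝ) :=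
        ⟨⟨le_refl _, hq12⟩, rfl⟩
      have hm2 : ((q2:ℝ), y) ∈ Icc (q1:ℝ) (q2:ℝ) ×ˢ ({y} : Set ℝ) :=
        ⟨⟨hq12, le_refl _⟩, rfl⟩
      have hp1g : p1.1 ∈ g y := ⟨p1, mem_image_of_mem _ hm1, rfl⟩
      have hp2g : p2.1 ∈ g y := ⟨p2, mem_image_of_mem _ hm2, rfl⟩
      have hp1seg : p1 ∈ segII := hgseg y ⟨hyS, hqlt, hsubA⟩ (mem_image_of_mem _ hm1)
      have hp2seg : p2 ∈ segII := hgseg y ⟨hyS, hqlt, hsubA⟩ (mem_image_of_mem _ hm2)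
      have hne : p1.1 ≠ p2.1 := by
        intro hcon
        have : p1 = p2 := fst_injOn_segII hp1seg hp2seg hcon
        have : ((q1:ℝ), y) = ((q2:ℝ), y) := (h k).symm.injective this
        have := (Prod.mk.injEq _ _ _ _).mp this
        exact absurd this.1 (ne_of_lt hqlt)
      have hconn : IsPreconnected (g y) := by
        apply IsPreconnected.image
        · apply IsPreconnected.image
          · exact (isPreconnected_Icc).prod isPreconnected_singleton
          · exact (h k).symm.continuous.continuousOn
        · exact continuous_fst.continuousOn
      have hIcc : Icc (min p1.1 p2.1) (max p1.1 p2.1) ⊆ g y := by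
        rcases le_total p1.1 p2.1 with hle | hle
        · rw [min_eq_left hle, max_eq_right hle]
          exact hconn.Icc_subset hp1g hp2g
        · rw [min_eq_right hle, max_eq_left hle]
          exact hconn.Icc_subset hp2g hp1g
      have hmm : min p1.1 p2.1 < max p1.1 p2.1 := min_lt_max.mpr hne
      have : Ioo (min p1.1 p2.1) (max p1.1 p2.1) ⊆ interior (g y) := by
        rw [← interior_Icc]
        exact interior_mono hIcc
      exact (nonempty_Ioo.mpr hmm).mono this
    exact hdisj.countable_of_nonempty_interior hint
  exact hS ((countable_iUnion hfibc).mono hcover)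


lemma sUnion_mem_idealII {𝒜 : Set (Set (ℝ × ℝ))} (h𝒜 : 𝒜 ⊆ idealII) (hc : 𝒜.Countable) :
    ⋃₀ 𝒜 ∈ idealII := by
  rcases eq_empty_or_nonempty 𝒜 with rfl | hne
  · exact ⟨fun _ => Homeomorph.refl _, by simp⟩
  obtain ⟨f, rfl⟩ := hc.exists_eq_range hne
  choose H hH using fun n => h𝒜 (mem_range_self n)
  refine ⟨fun m => H m.unpair.1 m.unpair.2, ?_⟩
  rw [sUnion_range]
  intro x hx
  obtain ⟨n, hn⟩ := mem_iUnion.mp hx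
  obtain ⟨k, hk⟩ := mem_iUnion.mp (hH n hn)
  exact mem_iUnion.2 ⟨Nat.pair n k, by simpa [Nat.unpair_pair] using hk⟩

lemma line_mem_idealII (y : ℝ) : Icc (0 : ℝ) 1 ×ˢ ({y} : Set ℝ) ∈ idealII := by
  refine ⟨fun _ => (Homeomorph.refl ℝ).prodCongr (Homeomorph.addRight y), ?_⟩
  rintro ⟨a, b⟩ ⟨ha, hb⟩
  refine mem_iUnion.2 ⟨0, ⟨(a, 0), ?_, ?_⟩⟩
  · exact ⟨ha, rfl⟩
  · simp only [mem_singleton_iff] at hb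
    simp [Homeomorph.prodCongr, hb]


/-- `add(I_𝕀) = ω₁`. -/
theorem stmt8 : addIdeal idealII = Cardinal.aleph 1 := by
  obtain ⟨S, hSmk⟩ : ∃ S : Set ℝ, #S = Cardinal.aleph 1 := by
    apply Cardinal.le_mk_iff_exists_set.mp
    rw [Cardinal.mk_real]
    exact Cardinal.aleph_one_le_continuum
  have hSnc : ¬ S.Countable := by
    rw [Cardinal.countable_iff_lt_aleph_one, hSmk]
    exact lt_irrefl _
  set 𝒜 : Set (Set (ℝ × ℝ)) := (fun y => Icc (0:ℝ) 1 ×ˢ ({y} : Set ℝ)) '' S with h𝒜def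
  have hsub : 𝒜 ⊆ idealII := by
    rintro _ ⟨y, -, rfl⟩
    exact line_mem_idealII y
  have hU : ⋃₀ 𝒜 = Icc (0:ℝ) 1 ×ˢ S := by
    ext ⟨a, b⟩
    simp only [h𝒜def, sUnion_image, mem_iUnion, mem_prod, mem_singleton_iff, mem_Icc,
      exists_prop]
    constructor
    · rintro ⟨y, hy, ha, rfl⟩
      exact ⟨ha, hy⟩
    · rintro ⟨ha, hb⟩
      exact ⟨b, hb, ha, rfl⟩
  have hinj : Set.InjOn (fun y => Icc (0:ℝ) 1 ×ˢ ({y} : Set ℝ)) S := by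
    intro a _ b _ hab
    simp only at hab
    have : ((0:ℝ), a) ∈ Icc (0:ℝ) 1 ×ˢ ({b} : Set ℝ) := by
      rw [← hab]
      exact ⟨⟨le_refl 0, zero_le_one⟩, rfl⟩
    exact this.2
  have hmk : #𝒜 = Cardinal.aleph 1 := by
    rw [h𝒜def, Cardinal.mk_image_eq_of_injOn _ _ hinj, hSmk]
  have hmem : Cardinal.aleph 1 ∈ {c : Cardinal | ∃ 𝒜 : Set (Set (ℝ × ℝ)),
      𝒜 ⊆ idealII ∧ ⋃₀ 𝒜 ∉ idealII ∧ Cardinal.mk 𝒜 = c} :=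
    ⟨𝒜, hsub, by rw [hU]; exact not_mem_idealII hSnc, hmk⟩
  unfold addIdeal addRelIdeal
  apply le_antisymm
  · exact csInf_le' hmem
  · apply le_csInf ⟨_, hmem⟩
    rintro c ⟨ℬ, hB, hBn, rfl⟩
    by_contra hlt
    push_neg at hlt
    have hcnt : ℬ.Countable := (Cardinal.countable_iff_lt_aleph_one _).mpr hlt
    exact hBn (sUnion_mem_idealII hB hcnt)
end

section
/- Let I_𝕀 be the smallest topologically invariant σ-ideal on ℝ² containing the segment 𝕀 = [0,1]×{0}; it consists of all subsets of countable unions ⋃_{k∈ω} h_k(𝕀) where each h_k : ℝ² → ℝ² is a homeomorphism. Then cof(I_𝕀) = 𝔠, the cardinality of the continuum. -/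
open Set Cardinal

lemma card_homeo_le : #((ℝ × ℝ) ≃ₜ (ℝ × ℝ)) ≤ 𝔠 := by
  have hd : DenseRange (fun q : ℚ × ℚ => ((q.1 : ℝ), (q.2 : ℝ))) :=
    (Rat.denseRange_cast (𝕜 := ℝ)).prodMap (Rat.denseRange_cast (𝕜 := ℝ))
  have hinj : Function.Injective
      (fun h : (ℝ × ℝ) ≃ₜ (ℝ × ℝ) => (fun q : ℚ × ℚ => h ((q.1 : ℝ), (q.2 : ℝ)))) := by
    intro f g hfg
    have : ⇑f = ⇑g := hd.equalizer f.continuous g.continuous (funext fun q => congrFun hfg q)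
    exact Homeomorph.ext (fun x => congrFun this x)
  calc #((ℝ × ℝ) ≃ₜ (ℝ × ℝ)) ≤ #(ℚ × ℚ → ℝ × ℝ) := mk_le_of_injective hinj
    _ ≤ 𝔠 := by
      rw [mk_arrow]
      simp [mk_real, Cardinal.mul_eq_self (le_refl ℵ₀ |>.trans aleph0_le_continuum)]

lemma seg_mem (t : ℝ) : ({t} ×ˢ Icc (0:ℝ) 1) ∈ idealII := by
  refine ⟨fun _ => (Homeomorph.prodComm ℝ ℝ).trans (Homeomorph.addLeft ((t, 0) : ℝ × ℝ)), ?_⟩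
  rintro ⟨x, y⟩ ⟨hx, hy⟩
  refine mem_iUnion.2 ⟨0, ⟨(y, 0), ⟨hy, rfl⟩, ?_⟩⟩
  simp at hx
  simp [Homeomorph.trans_apply, hx, Prod.ext_iff]

lemma key (t : ℝ) (h : ℕ → ((ℝ × ℝ) ≃ₜ (ℝ × ℝ)))
    (hcov : ({t} ×ˢ Icc (0:ℝ) 1) ⊆ ⋃ k, (⇑(h k)) '' segII) :
    ∃ (k : ℕ) (q : ℚ), ((h k) ((q : ℝ), 0)).1 = t := by
  haveI : CompleteSpace (Icc (0:ℝ) 1) := isClosed_Icc.completeSpace_coe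
  set F : ℕ → Set (Icc (0:ℝ) 1) := fun k => {y | ((t, (y : ℝ)) : ℝ × ℝ) ∈ ⇑(h k) '' segII}
  have hFclosed : ∀ k, IsClosed (F k) := by
    intro k
    have hc : IsCompact (⇑(h k) '' segII) :=
      (isCompact_Icc.prod isCompact_singleton).image (h k).continuous
    exact hc.isClosed.preimage (by fun_prop : Continuous fun y : Icc (0:ℝ) 1 => ((t, (y:ℝ)) : ℝ × ℝ))
  have hFcov : ⋃ k, F k = Set.univ := by
    ext y
    simp only [mem_iUnion, mem_univ, iff_true]
    obtain ⟨_, ⟨i, rfl⟩, hi⟩ := hcov (show ((t, (y:ℝ)) : ℝ × ℝ) ∈ {t} ×ˢ Icc (0:ℝ) 1 from ⟨rfl, y.2⟩)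
    exact ⟨i, hi⟩
  obtain ⟨k, hk⟩ := nonempty_interior_of_iUnion_of_closed hFclosed hFcov
  obtain ⟨y, hy⟩ := hk
  obtain ⟨ε, hε, hball⟩ := Metric.mem_nhds_iff.1 (mem_interior_iff_mem_nhds.1 hy)
  -- get a nondegenerate segment {t} ×ˢ Icc c d inside (h k) '' segII
  set c : ℝ := max ((y : ℝ) - ε/2) 0
  set d : ℝ := min ((y : ℝ) + ε/2) 1
  have hy0 : (0:ℝ) ≤ y := y.2.1
  have hy1 : (y:ℝ) ≤ 1 := y.2.2
  have hcd : c < d := by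
    rcases eq_or_lt_of_le hy0 with h0 | h0
    · have hc0 : c = 0 := by simp [c]; linarith
      rw [hc0]
      exact lt_min (by linarith) (by norm_num)
    · have hc1 : c < (y:ℝ) := by
        apply max_lt <;> linarith
      have : (y:ℝ) ≤ d := le_min (by linarith) hy1
      linarith
  have hseg : ({t} ×ˢ Icc c d : Set (ℝ × ℝ)) ⊆ ⇑(h k) '' segII := by
    rintro ⟨u, z⟩ ⟨hu, hz⟩
    simp only [mem_singleton_iff] at hu
    subst hu
    have hz01 : z ∈ Icc (0:ℝ) 1 := ⟨le_trans (le_max_right _ _) hz.1, le_trans hz.2 (min_le_right _ _)⟩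
    have : (⟨z, hz01⟩ : Icc (0:ℝ) 1) ∈ F k := by
      apply hball
      have h1 : (y:ℝ) - ε/2 ≤ z := le_trans (le_max_left _ _) hz.1
      have h2 : z ≤ (y:ℝ) + ε/2 := le_trans hz.2 (min_le_left _ _)
      simp [Metric.mem_ball, Subtype.dist_eq, Real.dist_eq, abs_lt]
      constructor <;> linarith
    exact this
  -- pull back and find a rational
  set P : Set (ℝ × ℝ) := ⇑(h k).symm '' ({t} ×ˢ Icc c d)
  have hPseg : P ⊆ segII := by
    rintro p ⟨x, hx, rfl⟩
    obtain ⟨s, hs, hsx⟩ := hseg hx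
    rwa [← hsx, Homeomorph.symm_apply_apply]
  have hPconn : IsPreconnected P :=
    ((isPreconnected_singleton.prod (isPreconnected_Icc)).image _ (h k).symm.continuous.continuousOn)
  set a : ℝ := ((h k).symm (t, c)).1
  set b : ℝ := ((h k).symm (t, d)).1
  have haP : ((h k).symm (t, c)) ∈ P := ⟨(t, c), ⟨rfl, le_refl c, le_of_lt hcd⟩, rfl⟩
  have hbP : ((h k).symm (t, d)) ∈ P := ⟨(t, d), ⟨rfl, le_of_lt hcd, le_refl d⟩, rfl⟩
  have hsnd : ∀ p ∈ P, p.2 = 0 := fun p hp => (hPseg hp).2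
  have hab : a ≠ b := by
    intro hab
    have : (h k).symm (t, c) = (h k).symm (t, d) := by
      have := Prod.ext hab ((hsnd _ haP).trans (hsnd _ hbP).symm)
      exact this
    have := (h k).symm.injective this
    simp [Prod.ext_iff] at this
    exact absurd this (ne_of_lt hcd)
  set Q : Set ℝ := Prod.fst '' P
  have hQconn : IsPreconnected Q := hPconn.image _ continuous_fst.continuousOn
  have haQ : a ∈ Q := ⟨_, haP, rfl⟩
  have hbQ : b ∈ Q := ⟨_, hbP, rfl⟩
  have hIcc : Icc (min a b) (max a b) ⊆ Q := by
    rcases le_total a b with hle | hle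
    · rw [min_eq_left hle, max_eq_right hle]; exact hQconn.Icc_subset haQ hbQ
    · rw [min_eq_right hle, max_eq_left hle]; exact hQconn.Icc_subset hbQ haQ
  obtain ⟨q, hq1, hq2⟩ := exists_rat_btwn (min_lt_max.2 hab)
  have hqQ : (q : ℝ) ∈ Q := hIcc ⟨le_of_lt hq1, le_of_lt hq2⟩
  obtain ⟨p, hpP, hpq⟩ := hqQ
  have hp0 : p = ((q : ℝ), 0) := Prod.ext hpq (hsnd _ hpP)
  obtain ⟨x, hx, hxp⟩ := hpP
  refine ⟨k, q, ?_⟩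
  have : (h k) p = x := by rw [← hxp, Homeomorph.apply_symm_apply]
  rw [← hp0, this]
  exact hx.1

lemma lower (c : Cardinal) (hc : c ∈ {c : Cardinal | ∃ ℬ : Set (Set (ℝ × ℝ)), ℬ ⊆ idealII ∧
      (∀ A ∈ idealII, ∃ B ∈ ℬ, A ⊆ B) ∧ Cardinal.mk ℬ = c}) : 𝔠 ≤ c := by
  obtain ⟨ℬ, hsub, hcof, rfl⟩ := hc
  have hH : ∀ B : ℬ, ∃ h : ℕ → ((ℝ × ℝ) ≃ₜ (ℝ × ℝ)),
      (B : Set (ℝ × ℝ)) ⊆ ⋃ k, ⇑(h k) '' segII := fun B => hsub B.2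
  choose H hHspec using hH
  have hex : ∀ t : ℝ, ∃ (B : ℬ) (k : ℕ) (q : ℚ), ((H B k) ((q : ℝ), 0)).1 = t := by
    intro t
    obtain ⟨B, hB, hBt⟩ := hcof _ (seg_mem t)
    obtain ⟨k, q, hq⟩ := key t (H ⟨B, hB⟩) (hBt.trans (hHspec ⟨B, hB⟩))
    exact ⟨⟨B, hB⟩, k, q, hq⟩
  choose fB fk fq hspec using hex
  have hinj : Function.Injective (fun t => (fB t, fk t, fq t)) := by
    intro t t' h
    simp only [Prod.mk.injEq] at h
    rw [← hspec t, ← hspec t', h.1, h.2.1, h.2.2]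
  have hle : 𝔠 ≤ #ℬ * (ℵ₀ * ℵ₀) := by
    calc 𝔠 = #ℝ := mk_real.symm
      _ ≤ #(↥ℬ × ℕ × ℚ) := mk_le_of_injective hinj
      _ = #ℬ * (ℵ₀ * ℵ₀) := by simp [mk_prod]
  by_contra hlt
  push_neg at hlt
  have : #↥ℬ * (ℵ₀ * ℵ₀) < 𝔠 :=
    Cardinal.mul_lt_of_lt aleph0_le_continuum hlt
      (Cardinal.mul_lt_of_lt aleph0_le_continuum aleph0_lt_continuum aleph0_lt_continuum)
  exact absurd hle (not_le.2 this)


/-- `cof(I_𝕀) = 𝔠`. -/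
theorem stmt9 : cofIdeal idealII = Cardinal.continuum := by
  set g : (ℕ → ((ℝ × ℝ) ≃ₜ (ℝ × ℝ))) → Set (ℝ × ℝ) := fun h => ⋃ k, ⇑(h k) '' segII
  set ℬ : Set (Set (ℝ × ℝ)) := Set.range g
  have hsub : ℬ ⊆ idealII := by rintro _ ⟨h, rfl⟩; exact ⟨h, subset_rfl⟩
  have hcof : ∀ A ∈ idealII, ∃ B ∈ ℬ, A ⊆ B := by
    rintro A ⟨h, hA⟩; exact ⟨g h, ⟨h, rfl⟩, hA⟩
  have hcard : #ℬ ≤ 𝔠 := by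
    calc #ℬ ≤ #(ℕ → ((ℝ × ℝ) ≃ₜ (ℝ × ℝ))) := mk_range_le
      _ = #((ℝ × ℝ) ≃ₜ (ℝ × ℝ)) ^ (ℵ₀ : Cardinal) := by rw [mk_arrow]; simp
      _ ≤ 𝔠 ^ (ℵ₀ : Cardinal) := power_le_power_right card_homeo_le
      _ = 𝔠 := continuum_power_aleph0
  have hmem : #ℬ ∈ {c : Cardinal | ∃ ℬ : Set (Set (ℝ × ℝ)), ℬ ⊆ idealII ∧
      (∀ A ∈ idealII, ∃ B ∈ ℬ, A ⊆ B) ∧ Cardinal.mk ℬ = c} := ⟨ℬ, hsub, hcof, rfl⟩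
  exact le_antisymm ((csInf_le' hmem).trans hcard) (le_csInf ⟨_, hmem⟩ lower)
end

section
/- Let I_𝕀 be the smallest topologically invariant σ-ideal on ℝ² containing the segment 𝕀 = [0,1]×{0}; it consists of all subsets of countable unions ⋃_{k∈ω} h_k(𝕀) where each h_k : ℝ² → ℝ² is a homeomorphism. Then for every uncountable set T ⊆ [0,1], the set ⋃_{t∈T} [0,1]×{t} does not belong to I_𝕀. -/
open Set Cardinal

/-- For every uncountable `T ⊆ [0,1]` the set `⋃_{t ∈ T} [0,1] × {t}` is not in `I_𝕀`. -/
theorem stmt10 (T : Set ℝ) (hT : T ⊆ Set.Icc (0 : ℝ) 1) (hunc : ¬ T.Countable) :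
    (⋃ t ∈ T, Set.Icc (0 : ℝ) 1 ×ˢ ({t} : Set ℝ)) ∉ idealII := by
  rintro ⟨h, hsub⟩
  apply hunc
  have key : ∀ t ∈ T, ∃ (k : ℕ) (q : ℚ), ((h k) ((q : ℝ), 0)).2 = t := by
    intro t ht
    haveI : Nonempty (Set.Icc (0:ℝ) 1) := ⟨⟨0, by norm_num⟩⟩
    -- the segment at height t is covered by the countably many compact sets h k '' segII
    have hcov : ∀ x : Set.Icc (0:ℝ) 1, ∃ k, ((x : ℝ), t) ∈ (h k) '' segII := by
      intro x
      have hx : ((x : ℝ), t) ∈ ⋃ s ∈ T, Set.Icc (0:ℝ) 1 ×ˢ ({s} : Set ℝ) :=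
        Set.mem_iUnion₂.2 ⟨t, ht, ⟨x.2, rfl⟩⟩
      simpa using hsub hx
    set g : ℕ → Set (Set.Icc (0:ℝ) 1) :=
      fun k => (fun x : Set.Icc (0:ℝ) 1 => ((x : ℝ), t)) ⁻¹' ((h k) '' segII) with hg
    have hgclosed : ∀ k, IsClosed (g k) := by
      intro k
      have hcomp : IsCompact ((h k) '' segII) :=
        (IsCompact.prod isCompact_Icc isCompact_singleton).image (h k).continuous
      exact hcomp.isClosed.preimage (continuous_subtype_val.prodMk continuous_const)
    have hgunion : (⋃ k, g k) = Set.univ := by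
      ext x
      simp only [mem_iUnion, Set.mem_univ, iff_true]
      exact hcov x
    obtain ⟨k, hk⟩ := nonempty_interior_of_iUnion_of_closed hgclosed hgunion
    obtain ⟨x₀, hx₀⟩ := hk
    obtain ⟨ε, hε, hball⟩ := Metric.isOpen_iff.1 isOpen_interior x₀ hx₀
    have hballg : Metric.ball x₀ ε ⊆ g k := hball.trans interior_subset
    set c : ℝ := max 0 ((x₀ : ℝ) - ε/2) with hc
    set d : ℝ := min 1 ((x₀ : ℝ) + ε/2) with hd
    have hx₀01 : (x₀ : ℝ) ∈ Set.Icc (0:ℝ) 1 := x₀.2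
    have hcd : c < d := by
      apply max_lt <;> apply lt_min
      · norm_num
      · linarith [hx₀01.1]
      · linarith [hx₀01.2]
      · linarith
    have hseg : ∀ x ∈ Set.Icc c d, ((x : ℝ), t) ∈ (h k) '' segII := by
      intro x hx
      have hx01 : x ∈ Set.Icc (0:ℝ) 1 :=
        ⟨le_trans (le_max_left _ _) hx.1, le_trans hx.2 (min_le_left _ _)⟩
      have hdist : dist (⟨x, hx01⟩ : Set.Icc (0:ℝ) 1) x₀ < ε := by
        rw [Subtype.dist_eq, Real.dist_eq, abs_lt]
        constructor
        · have := le_trans (le_max_right 0 ((x₀:ℝ) - ε/2)) hx.1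
          linarith
        · have := le_trans hx.2 (min_le_right 1 ((x₀:ℝ) + ε/2))
          linarith
      exact hballg hdist
    -- pull back the subsegment into segII
    set P : Set (ℝ × ℝ) := ((h k).symm) '' (Set.Icc c d ×ˢ ({t} : Set ℝ)) with hP
    have hPseg : P ⊆ segII := by
      rintro _ ⟨p, hp, rfl⟩
      obtain ⟨s, hs, hsp⟩ := hseg p.1 hp.1
      have hpeq : p = (p.1, t) := by
        have := hp.2
        simp only [mem_singleton_iff] at this
        exact Prod.ext rfl this
      have : (h k).symm p = s := by
        rw [hpeq, ← hsp]
        exact (h k).symm_apply_apply s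
      rw [this]; exact hs
    have hPconn : IsPreconnected P :=
      (((convex_Icc c d).prod (convex_singleton t)).isPreconnected).image _
        (h k).symm.continuous.continuousOn
    have hAP : (h k).symm (c, t) ∈ P := ⟨(c, t), ⟨⟨le_refl c, hcd.le⟩, rfl⟩, rfl⟩
    have hBP : (h k).symm (d, t) ∈ P := ⟨(d, t), ⟨⟨hcd.le, le_refl d⟩, rfl⟩, rfl⟩
    set Q : Set ℝ := Prod.fst '' P with hQ
    have hQconn : IsPreconnected Q := hPconn.image _ continuous_fst.continuousOn
    have hne : ((h k).symm (c, t)).1 ≠ ((h k).symm (d, t)).1 := by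
      intro heq
      have h2c : ((h k).symm (c, t)).2 = 0 := (hPseg hAP).2
      have h2d : ((h k).symm (d, t)).2 = 0 := (hPseg hBP).2
      have : (h k).symm (c, t) = (h k).symm (d, t) := Prod.ext heq (h2c.trans h2d.symm)
      have := (h k).symm.injective this
      exact absurd (congrArg Prod.fst this) (ne_of_lt hcd)
    obtain ⟨a, b, hab, haQ, hbQ⟩ :
        ∃ a b : ℝ, a < b ∧ a ∈ Q ∧ b ∈ Q := by
      rcases lt_or_gt_of_ne hne with h' | h'
      · exact ⟨_, _, h', ⟨_, hAP, rfl⟩, ⟨_, hBP, rfl⟩⟩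
      · exact ⟨_, _, h', ⟨_, hBP, rfl⟩, ⟨_, hAP, rfl⟩⟩
    obtain ⟨q, hq1, hq2⟩ := exists_rat_btwn hab
    have hqQ : (q : ℝ) ∈ Q := hQconn.Icc_subset haQ hbQ ⟨hq1.le, hq2.le⟩
    obtain ⟨p, hpP, hp1⟩ := hqQ
    have hp2 : p.2 = 0 := (hPseg hpP).2
    have hpeq : p = ((q : ℝ), 0) := Prod.ext hp1 hp2
    obtain ⟨r, hr, hrp⟩ := hpP
    refine ⟨k, q, ?_⟩
    have : (h k) p = r := by rw [← hrp]; exact (h k).apply_symm_apply r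
    rw [← hpeq, this]
    simpa using hr.2
  -- conclude countability
  have hsubT : T ⊆ ⋃ (k : ℕ) (q : ℚ), {((h k) ((q : ℝ), 0)).2} := by
    intro t ht
    obtain ⟨k, q, hkq⟩ := key t ht
    exact Set.mem_iUnion₂.2 ⟨k, q, hkq.symm⟩
  exact Set.Countable.mono hsubT
    (Set.countable_iUnion fun k => Set.countable_iUnion fun q => Set.countable_singleton _)
end

section
/- Let n ≥ 1 and let C₁, …, Cₙ be Cantor sets in the real line ℝ. Then the product ∏_{i=1}^n Cᵢ is a tame Cantor set in ℝⁿ; that is, there exists a homeomorphism h : ℝⁿ → ℝⁿ mapping ∏_{i=1}^n Cᵢ into the line ℝ×{0}^{n-1}. -/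
open Set Cardinal

/-- A σ-ideal: a nonempty family of sets closed under subsets and countable unions. -/
def IsSigmaIdeal {X : Type*} (I : Set (Set X)) : Prop :=
  I.Nonempty ∧ (∀ A ∈ I, ∀ B : Set X, B ⊆ A → B ∈ I) ∧
    ∀ f : ℕ → Set X, (∀ k, f k ∈ I) → (⋃ k, f k) ∈ I

/-- Non-trivial: contains an uncountable set and does not contain the whole space. -/
def IsNontrivialIdeal {X : Type*} (I : Set (Set X)) : Prop :=
  (∃ A ∈ I, ¬ A.Countable) ∧ Set.univ ∉ I

/-- Topologically invariant: `I = {h(A) : A ∈ I}` for every homeomorphism `h`. -/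
def TopInvariant {X : Type*} [TopologicalSpace X] (I : Set (Set X)) : Prop :=
  ∀ h : X ≃ₜ X, I = (fun A : Set X => (⇑h) '' A) '' I

/-- BP-base: every member is contained in a member having the Baire property. -/
def HasBPBase {X : Type*} [TopologicalSpace X] (I : Set (Set X)) : Prop :=
  ∀ A ∈ I, ∃ B ∈ I, A ⊆ B ∧ ∃ U : Set X, IsOpen U ∧ IsMeagre (symmDiff B U)

/-- Analytic base: every member is contained in an analytic member. -/
def HasAnalyticBase {X : Type*} [TopologicalSpace X] (I : Set (Set X)) : Prop :=
  ∀ A ∈ I, ∃ B ∈ I, A ⊆ B ∧ MeasureTheory.AnalyticSet B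

/-- A Cantor set: a subset homeomorphic to the Cantor cube `{0,1}^ω`. -/
def IsCantorSet {X : Type*} [TopologicalSpace X] (C : Set X) : Prop :=
  Nonempty (C ≃ₜ (ℕ → Bool))

/-- The line `ℝ × {0}^{n-1}` inside `ℝⁿ`. -/
def line (n : ℕ) : Set (Fin n → ℝ) := {x | ∀ i : Fin n, 0 < (i : ℕ) → x i = 0}

/-- A tame Cantor set in `ℝⁿ`: a Cantor set ambiently homeomorphic to a subset of
the line `ℝ × {0}^{n-1}`. -/
def IsTameCantorSet {n : ℕ} (C : Set (Fin n → ℝ)) : Prop :=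
  IsCantorSet C ∧ ∃ h : (Fin n → ℝ) ≃ₜ (Fin n → ℝ), (⇑h) '' C ⊆ line n

/-- The σ-ideal `σC₀` generated by tame Cantor sets in `ℝⁿ`. -/
def sigmaC0 (n : ℕ) : Set (Set (Fin n → ℝ)) :=
  {A | ∃ C : ℕ → Set (Fin n → ℝ), (∀ k, IsTameCantorSet (C k)) ∧ A ⊆ ⋃ k, C k}

/-- The σ-ideal of meager subsets of a topological space. -/
def meagerIdeal (X : Type*) [TopologicalSpace X] : Set (Set X) :=
  {A : Set X | IsMeagre A}


noncomputable section
namespace Stmt12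
open Set Filter Topology Function Classical

/-- master scale sequence -/
def eps (m : ℕ) : ℝ := (1/4 : ℝ) ^ (m + 1)

lemma eps_pos (m : ℕ) : 0 < eps m := pow_pos (by norm_num) _

lemma eps_nonneg (m : ℕ) : 0 ≤ eps m := (eps_pos m).le

lemma eps_antitone {a b : ℕ} (h : a ≤ b) : eps b ≤ eps a := by
  apply pow_le_pow_of_le_one (by norm_num) (by norm_num)
  omega

lemma summable_eps : Summable eps := by
  have h : Summable (fun m : ℕ => (1/4 : ℝ) ^ m) :=
    summable_geometric_of_lt_one (by norm_num) (by norm_num)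
  have := h.mul_right (1/4 : ℝ)
  apply this.congr
  intro m
  simp [eps, pow_succ]

lemma summable_of_le_eps {u : ℕ → ℝ} (h0 : ∀ k, 0 ≤ u k) (h1 : ∀ k, u k ≤ eps k) :
    Summable u :=
  Summable.of_nonneg_of_le h0 h1 summable_eps

lemma summable_eps_comp (ν : ℕ → ℕ) (hν : ∀ k, k ≤ ν k) : Summable (fun k => eps (ν k)) :=
  summable_of_le_eps (fun k => eps_nonneg _) (fun k => eps_antitone (hν k))

lemma eps_tail (m : ℕ) : ∑' k : ℕ, eps (k + (m + 1)) = eps m / 3 := by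
  have h1 : ∀ k : ℕ, eps (k + (m + 1)) = (1/4 : ℝ) ^ (m + 2) * (1/4) ^ k := by
    intro k
    simp only [eps]
    rw [← pow_add]
    ring_nf
  rw [tsum_congr h1, tsum_mul_left, tsum_geometric_of_lt_one (by norm_num) (by norm_num)]
  simp only [eps]
  rw [pow_succ]
  norm_num
  ring

/-- embedding of the Cantor cube into ℝ along scale indices `ν` -/
def embA (ν : ℕ → ℕ) (b : ℕ → Bool) : ℝ := ∑' k, if b k then eps (ν k) else 0

lemma embA_term_nonneg (ν : ℕ → ℕ) (b : ℕ → Bool) (k : ℕ) :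
    0 ≤ (if b k then eps (ν k) else 0) := by
  split <;> simp [eps_nonneg]

lemma embA_term_le (ν : ℕ → ℕ) (b : ℕ → Bool) (k : ℕ) :
    (if b k then eps (ν k) else 0) ≤ eps (ν k) := by
  split <;> simp [eps_nonneg]

lemma summable_embA (ν : ℕ → ℕ) (hν : ∀ k, k ≤ ν k) (b : ℕ → Bool) :
    Summable (fun k => if b k then eps (ν k) else 0) :=
  Summable.of_nonneg_of_le (embA_term_nonneg ν b) (embA_term_le ν b) (summable_eps_comp ν hν)

lemma embA_continuous (ν : ℕ → ℕ) (hν : ∀ k, k ≤ ν k) : Continuous (embA ν) := by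
  apply continuous_tsum (u := fun k => eps (ν k))
  · intro k
    exact (continuous_of_discreteTopology (α := Bool) (f := fun v => if v then eps (ν k) else 0)).comp
      (continuous_apply k)
  · exact summable_eps_comp ν hν
  · intro k b
    rw [Real.norm_eq_abs, abs_of_nonneg (embA_term_nonneg ν b k)]
    exact embA_term_le ν b k

def emb : (ℕ → Bool) → ℝ := embA id

lemma emb_inj : Function.Injective emb := by
  intro b c h
  by_contra hne
  have hex : ∃ m, b m ≠ c m := Function.ne_iff.mp hne
  set m0 := Nat.find hex with hm0
  have hm0ne : b m0 ≠ c m0 := Nat.find_spec hex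
  set d : ℕ → ℝ := fun m => (if b m then eps m else 0) - (if c m then eps m else 0) with hd
  have hsb : Summable (fun k => if b k then eps k else 0) := summable_embA id (fun k => le_refl k) b
  have hsc : Summable (fun k => if c k then eps k else 0) := summable_embA id (fun k => le_refl k) c
  have hsd : Summable d := hsb.sub hsc
  have htsum : ∑' m, d m = 0 := by
    rw [Summable.tsum_sub hsb hsc]
    have : emb b = emb c := h
    simpa [emb, embA] using sub_eq_zero_of_eq this
  have hsplit : ∑ i ∈ Finset.range (m0 + 1), d i + ∑' i : ℕ, d (i + (m0 + 1)) = 0 := by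
    rw [Summable.sum_add_tsum_nat_add (m0 + 1) hsd, htsum]
  have hzero : ∀ m < m0, d m = 0 := by
    intro m hm
    have : ¬ b m ≠ c m := Nat.find_min hex hm
    simp only [hd]
    rw [not_not.mp this]
    ring
  have hfin : ∑ i ∈ Finset.range (m0 + 1), d i = d m0 := by
    rw [Finset.sum_range_succ]
    rw [Finset.sum_eq_zero (fun i hi => hzero i (Finset.mem_range.mp hi))]
    ring
  have hdm0 : |d m0| = eps m0 := by
    simp only [hd]
    rcases Bool.eq_false_or_eq_true (b m0) with hb | hb <;>
      rcases Bool.eq_false_or_eq_true (c m0) with hc | hc <;>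
      simp [hb, hc, abs_of_nonneg (eps_nonneg m0), eps_nonneg m0] at hm0ne ⊢
  have htail : |∑' i : ℕ, d (i + (m0 + 1))| ≤ eps m0 / 3 := by
    have h1 : |∑' i : ℕ, d (i + (m0 + 1))| ≤ ∑' i : ℕ, |d (i + (m0 + 1))| := by
      have hs : Summable (fun i => ‖d (i + (m0 + 1))‖) := by
        apply summable_of_le_eps (fun k => abs_nonneg _)
        intro k
        calc |d (k + (m0 + 1))| ≤ eps (k + (m0 + 1)) := by
              simp only [hd]
              rw [abs_sub_comm]
              apply abs_sub_le_of_nonneg_of_le (embA_term_nonneg id c _) (embA_term_le id c _)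
                (embA_term_nonneg id b _) (embA_term_le id b _)
          _ ≤ eps k := eps_antitone (by omega)
      simpa using norm_tsum_le_tsum_norm hs
    refine h1.trans ?_
    have h2 : ∑' i : ℕ, |d (i + (m0 + 1))| ≤ ∑' i : ℕ, eps (i + (m0 + 1)) := by
      apply Summable.tsum_le_tsum _ _ _
      · intro i
        simp only [hd]
        rw [abs_sub_comm]
        apply abs_sub_le_of_nonneg_of_le (embA_term_nonneg id c _) (embA_term_le id c _)
          (embA_term_nonneg id b _) (embA_term_le id b _)
      · apply summable_of_le_eps (fun k => abs_nonneg _)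
        intro k
        calc |d (k + (m0 + 1))| ≤ eps (k + (m0 + 1)) := by
              simp only [hd]
              rw [abs_sub_comm]
              apply abs_sub_le_of_nonneg_of_le (embA_term_nonneg id c _) (embA_term_le id c _)
                (embA_term_nonneg id b _) (embA_term_le id b _)
          _ ≤ eps k := eps_antitone (by omega)
      · exact (summable_eps.comp_injective (add_left_injective (m0+1)))
    rw [eps_tail m0] at h2
    exact h2
  have : eps m0 ≤ eps m0 / 3 := by
    calc eps m0 = |d m0| := hdm0.symm
      _ = |∑' i : ℕ, d (i + (m0 + 1))| := by
          have : d m0 = - ∑' i : ℕ, d (i + (m0 + 1)) := by linarith [hsplit, hfin]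
          rw [this, abs_neg]
      _ ≤ eps m0 / 3 := htail
  have := eps_pos m0
  linarith


section Key
variable {n : ℕ}

lemma nu_ge (n : ℕ) (hn : 0 < n) (i : Fin n) (k : ℕ) : k ≤ k * n + (i : ℕ) :=
  le_add_right (Nat.le_mul_of_pos_right k hn)

lemma regroup (hn : 0 < n) (B : Fin n → ℕ → Bool) :
    ∑ i : Fin n, embA (fun k => k * n + (i : ℕ)) (B i)
      = emb (fun m => B ⟨m % n, Nat.mod_lt _ hn⟩ (m / n)) := by
  haveI : NeZero n := ⟨hn.ne'⟩
  set F : ℕ × Fin n → ℝ := fun p => if B p.2 p.1 then eps (p.1 * n + (p.2 : ℕ)) else 0 with hF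
  have hFcomp : ∀ m : ℕ, F ((Nat.divModEquiv n) m)
      = (if B ⟨m % n, Nat.mod_lt _ hn⟩ (m / n) then eps m else 0) := by
    intro m
    have h2 : ((Nat.divModEquiv n) m).2 = (⟨m % n, Nat.mod_lt _ hn⟩ : Fin n) := by
      ext
      simp [Nat.divModEquiv, Fin.val_natCast]
    have h1 : ((Nat.divModEquiv n) m).1 = m / n := rfl
    simp only [hF, h1, h2]
    have : m / n * n + m % n = m := by
      calc m / n * n + m % n = n * (m / n) + m % n := by ring
        _ = m := Nat.div_add_mod m n
    rw [this]
  have hFnonneg : ∀ p, 0 ≤ F p := by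
    intro p; simp only [hF]; split <;> simp [eps_nonneg]
  have hFsummable : Summable F := by
    rw [← (Nat.divModEquiv n).summable_iff]
    apply summable_of_le_eps (fun m => hFnonneg _)
    intro m
    show F ((Nat.divModEquiv n) m) ≤ eps m
    rw [hFcomp]
    split <;> simp [eps_nonneg]
  have hrow : ∀ i : Fin n, Summable (fun k => F (k, i)) := by
    intro i
    apply Summable.of_nonneg_of_le (fun k => hFnonneg _) (fun k => _)
      (summable_eps_comp (fun k => k * n + (i : ℕ)) (nu_ge n hn i))
    intro k
    simp only [hF]
    split <;> simp [eps_nonneg]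
  calc ∑ i : Fin n, embA (fun k => k * n + (i : ℕ)) (B i)
      = ∑ i : Fin n, ∑' k, F (k, i) := by
        apply Finset.sum_congr rfl
        intro i _
        exact tsum_congr (fun k => rfl)
    _ = ∑' k, ∑ i : Fin n, F (k, i) := (Summable.tsum_finsetSum (fun i _ => hrow i)).symm
    _ = ∑' k, ∑' i : Fin n, F (k, i) := tsum_congr (fun k => (tsum_fintype _).symm)
    _ = ∑' p : ℕ × Fin n, F p := (Summable.tsum_prod' hFsummable (fun k => Summable.of_finite)).symm
    _ = ∑' m, F ((Nat.divModEquiv n) m) := ((Nat.divModEquiv n).tsum_eq F).symm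
    _ = emb (fun m => B ⟨m % n, Nat.mod_lt _ hn⟩ (m / n)) := by
        exact tsum_congr (fun m => by rw [hFcomp m]; rfl)

lemma key (hn : 0 < n) (B B' : Fin n → ℕ → Bool)
    (h : ∑ i : Fin n, embA (fun k => k * n + (i : ℕ)) (B i)
       = ∑ i : Fin n, embA (fun k => k * n + (i : ℕ)) (B' i)) : B = B' := by
  rw [regroup hn B, regroup hn B'] at h
  have hfun := emb_inj h
  funext i k
  have := congrFun hfun (k * n + (i : ℕ))
  have hmod : (k * n + (i : ℕ)) % n = (i : ℕ) := by
    rw [show k * n + (i : ℕ) = n * k + (i : ℕ) by ring, Nat.mul_add_mod]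
    exact Nat.mod_eq_of_lt i.isLt
  have hdiv : (k * n + (i : ℕ)) / n = k := by
    rw [show k * n + (i : ℕ) = n * k + (i : ℕ) by ring, Nat.mul_add_div hn]
    simp [Nat.div_eq_of_lt i.isLt]
  simpa [hmod, hdiv] using this

end Key

section CantorFacts

lemma cantor_compact {X : Type*} [TopologicalSpace X] (C : Set X) (h : IsCantorSet C) :
    IsCompact C := by
  obtain ⟨e⟩ := h
  haveI : CompactSpace ↥C := e.symm.compactSpace
  exact isCompact_iff_compactSpace.mpr this

lemma cantor_interior_empty (C : Set ℝ) (h : IsCantorSet C) : interior C = ∅ := by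
  obtain ⟨e⟩ := h
  by_contra h0
  obtain ⟨z, hz⟩ := nonempty_iff_ne_empty.mpr h0
  obtain ⟨ε, hε, hball⟩ := Metric.mem_nhds_iff.mp (mem_interior_iff_mem_nhds.mp hz)
  have hsub : Icc z (z + ε / 2) ⊆ C := by
    intro y hy
    apply hball
    rw [Metric.mem_ball, Real.dist_eq, abs_lt]
    exact ⟨by linarith [hy.1], by linarith [hy.2]⟩
  set g : ↥(Icc z (z + ε / 2)) → (ℕ → Bool) := fun x => e ⟨x.1, hsub x.2⟩ with hg
  have hgc : Continuous g :=
    e.continuous.comp (continuous_subtype_val.subtype_mk _)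
  haveI : PreconnectedSpace ↥(Icc z (z + ε / 2)) :=
    Subtype.preconnectedSpace isPreconnected_Icc
  have himg : (range g).Subsingleton := by
    have h2 : IsPreconnected (g '' univ) := isPreconnected_univ.image g hgc.continuousOn
    rw [image_univ] at h2
    exact h2.subsingleton
  have hz1 : z ∈ Icc z (z + ε / 2) := ⟨le_rfl, by linarith⟩
  have hz2 : z + ε / 2 ∈ Icc z (z + ε / 2) := ⟨by linarith, le_rfl⟩
  have hgeq : g ⟨z, hz1⟩ = g ⟨z + ε / 2, hz2⟩ :=
    himg (mem_range_self _) (mem_range_self _)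
  have h3 := e.injective hgeq
  have h4 := congrArg Subtype.val h3
  simp only [hg] at h4
  norm_num at h4
  linarith

end CantorFacts

section Ramp

def ramp (u v x : ℝ) : ℝ := max 0 (min 1 ((x - u) / (v - u)))

lemma ramp_continuous (u v : ℝ) : Continuous (ramp u v) := by
  apply continuous_const.max
  apply continuous_const.min
  exact (continuous_id.sub continuous_const).div_const _

lemma ramp_nonneg (u v x : ℝ) : 0 ≤ ramp u v x := le_max_left _ _

lemma ramp_le_one (u v x : ℝ) : ramp u v x ≤ 1 :=
  max_le zero_le_one (min_le_left _ _)

lemma ramp_mono {u v : ℝ} (h : u < v) : Monotone (ramp u v) := by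
  intro x y hxy
  apply max_le_max le_rfl
  apply min_le_min le_rfl
  apply div_le_div_of_nonneg_right ?_ (by linarith) |>.trans le_rfl
  · linarith
  
lemma ramp_eq_zero {u v x : ℝ} (h : u < v) (hx : x ≤ u) : ramp u v x = 0 := by
  have hq : (x - u) / (v - u) ≤ 0 :=
    div_nonpos_of_nonpos_of_nonneg (by linarith) (by linarith)
  have : min 1 ((x - u) / (v - u)) ≤ 0 := le_trans (min_le_right _ _) hq
  simp [ramp, max_eq_left this]

lemma ramp_eq_one {u v x : ℝ} (h : u < v) (hx : v ≤ x) : ramp u v x = 1 := by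
  have hq : (1:ℝ) ≤ (x - u) / (v - u) := by
    rw [le_div_iff₀ (by linarith)]
    linarith
  rw [ramp, min_eq_left hq]
  simp

end Ramp

section Straighten

lemma exists_gap (A : Set ℝ) (hcl : IsClosed A) (hAi : interior A = ∅) (p q : ℝ) :
    p < q → ∃ u v : ℝ, p < u ∧ u < v ∧ v < q ∧ Ioo u v ∩ A = ∅ := by
  intro hpq
  have hnsub : ¬ Ioo p q ⊆ A := by
    intro hsub
    have : Ioo p q ⊆ interior A := interior_maximal hsub isOpen_Ioo
    rw [hAi, subset_empty_iff, Ioo_eq_empty_iff] at this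
    exact this (by linarith)
  obtain ⟨c, hc, hcA⟩ := not_subset.mp hnsub
  obtain ⟨r, hr, hballr⟩ := Metric.isOpen_iff.mp hcl.isOpen_compl c hcA
  set ρ := min (r / 2) (min ((c - p) / 2) ((q - c) / 2)) with hρ
  have hρpos : 0 < ρ := by
    apply lt_min (by linarith)
    apply lt_min <;> [linarith [hc.1]; linarith [hc.2]]
  refine ⟨c - ρ, c + ρ, ?_, by linarith, ?_, ?_⟩
  · have : ρ ≤ (c - p) / 2 := (min_le_right _ _).trans (min_le_left _ _)
    linarith
  · have : ρ ≤ (q - c) / 2 := (min_le_right _ _).trans (min_le_right _ _)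
    linarith
  · rw [eq_empty_iff_forall_notMem]
    rintro x ⟨hx, hxA⟩
    have hρr : ρ ≤ r / 2 := min_le_left _ _
    have : x ∈ Metric.ball c r := by
      rw [Metric.mem_ball, Real.dist_eq, abs_lt]
      constructor <;> [linarith [hx.1]; linarith [hx.2]]
    exact hballr this hxA

lemma straighten (A : Set ℝ) (hA : IsCompact A) (hAi : interior A = ∅)
    (ν : ℕ → ℕ) (hν : ∀ k, k ≤ ν k) :
    ∃ φ : ℝ ≃ₜ ℝ, ∃ β : ℝ → (ℕ → Bool), ∀ x ∈ A, φ x = embA ν (β x) := by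
  classical
  -- enumeration of rational pairs
  set E := Denumerable.eqv (ℚ × ℚ) with hE
  set P : ℕ → ℚ × ℚ := fun k => E.symm k with hP
  -- gaps
  have hgapsex : ∀ k : ℕ, ∃ uv : ℝ × ℝ,
      (((P k).1 : ℝ) < ((P k).2 : ℝ)) →
      (((P k).1 : ℝ) < uv.1 ∧ uv.1 < uv.2 ∧ uv.2 < ((P k).2 : ℝ) ∧ Ioo uv.1 uv.2 ∩ A = ∅) := by
    intro k
    by_cases h : ((P k).1 : ℝ) < ((P k).2 : ℝ)
    · obtain ⟨u, v, h1, h2, h3, h4⟩ := exists_gap A hA.isClosed hAi _ _ h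
      exact ⟨(u, v), fun _ => ⟨h1, h2, h3, h4⟩⟩
    · exact ⟨(0, 0), fun hc => absurd hc h⟩
  choose U hU using hgapsex
  -- the separating functions
  set d : ℕ → ℝ → ℝ := fun k x =>
    if (((P k).1 : ℝ) < ((P k).2 : ℝ)) then ramp (U k).1 (U k).2 x else 0 with hd
  have d_cont : ∀ k, Continuous (d k) := by
    intro k
    simp only [hd]
    split
    · exact ramp_continuous _ _
    · exact continuous_const
  have d_nonneg : ∀ k x, 0 ≤ d k x := by
    intro k x
    simp only [hd]; split; exacts [ramp_nonneg _ _ _, le_rfl]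
  have d_le_one : ∀ k x, d k x ≤ 1 := by
    intro k x
    simp only [hd]; split; exacts [ramp_le_one _ _ _, zero_le_one]
  have d_mono : ∀ k, Monotone (d k) := by
    intro k
    simp only [hd]
    split
    · next h => exact ramp_mono (hU k h).2.1
    · exact monotone_const
  have d_A : ∀ k, ∀ x ∈ A, d k x = 0 ∨ d k x = 1 := by
    intro k x hx
    simp only [hd]
    split
    · next h =>
      obtain ⟨h1, h2, h3, h4⟩ := hU k h
      have hnot : x ∉ Ioo (U k).1 (U k).2 := by
        intro hmem
        rw [eq_empty_iff_forall_notMem] at h4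
        exact h4 x ⟨hmem, hx⟩
      rw [mem_Ioo, not_and_or, not_lt, not_lt] at hnot
      rcases hnot with h5 | h5
      · exact Or.inl (ramp_eq_zero h2 h5)
      · exact Or.inr (ramp_eq_one h2 h5)
    · exact Or.inl rfl
  have d_sep : ∀ x y : ℝ, x < y → ∃ k, d k x = 0 ∧ d k y = 1 := by
    intro x y hxy
    obtain ⟨p, hp1, hp2⟩ := exists_rat_btwn hxy
    obtain ⟨q, hq1, hq2⟩ := exists_rat_btwn hp2
    refine ⟨E (p, q), ?_⟩
    have hPk : P (E (p, q)) = (p, q) := by simp [hP]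
    have hguard : ((P (E (p, q))).1 : ℝ) < ((P (E (p, q))).2 : ℝ) := by
      rw [hPk]
      exact hq1
    obtain ⟨h1, h2, h3, _⟩ := hU (E (p, q)) hguard
    rw [hPk] at h1 h3
    constructor
    · simp only [hd, if_pos hguard]
      exact ramp_eq_zero h2 (by linarith)
    · simp only [hd, if_pos hguard]
      exact ramp_eq_one h2 (by linarith)
  -- φ0
  set φ0 : ℝ → ℝ := fun x => ∑' k, eps (ν k) * d k x with hφ0
  have term_nonneg : ∀ x k, 0 ≤ eps (ν k) * d k x :=
    fun x k => mul_nonneg (eps_nonneg _) (d_nonneg k x)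
  have term_le : ∀ x k, eps (ν k) * d k x ≤ eps (ν k) := fun x k => by
    calc eps (ν k) * d k x ≤ eps (ν k) * 1 :=
      mul_le_mul_of_nonneg_left (d_le_one k x) (eps_nonneg _)
    _ = eps (ν k) := mul_one _
  have hsum : ∀ x, Summable (fun k => eps (ν k) * d k x) := fun x =>
    Summable.of_nonneg_of_le (term_nonneg x) (term_le x) (summable_eps_comp ν hν)
  have φ0_cont : Continuous φ0 := by
    apply continuous_tsum (u := fun k => eps (ν k))
    · exact fun k => continuous_const.mul (d_cont k)
    · exact summable_eps_comp ν hν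
    · intro k x
      rw [Real.norm_eq_abs, abs_of_nonneg (term_nonneg x k)]
      exact term_le x k
  have φ0_strict : StrictMono φ0 := by
    intro x y hxy
    obtain ⟨k0, hk1, hk2⟩ := d_sep x y hxy
    have hdiff : φ0 y - φ0 x = ∑' k, (eps (ν k) * d k y - eps (ν k) * d k x) := by
      rw [Summable.tsum_sub (hsum y) (hsum x)]
    have hpos : 0 < ∑' k, (eps (ν k) * d k y - eps (ν k) * d k x) := by
      refine Summable.tsum_pos ((hsum y).sub (hsum x)) (fun k => ?_) k0 ?_
      · have h5 := d_mono k hxy.le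
        nlinarith [eps_nonneg (ν k)]
      · rw [hk1, hk2]
        simpa using eps_pos (ν k0)
    linarith [hdiff ▸ hpos]
  have φ0_nonneg : ∀ x, 0 ≤ φ0 x := fun x => tsum_nonneg (term_nonneg x)
  set M : ℝ := ∑' k, eps (ν k) with hM
  have φ0_le : ∀ x, φ0 x ≤ M :=
    fun x => Summable.tsum_le_tsum (term_le x) (hsum x) (summable_eps_comp ν hν)
  -- bound for A
  obtain ⟨R, hR⟩ := (Bornology.IsBounded.subset_closedBall_lt hA.isBounded 0 0)
  -- hR : 0 < R ∧ A ⊆ closedBall 0 R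
  set out : ℝ → ℝ := fun x => max (x - R) 0 + min (x + R) 0 with hout
  have out_cont : Continuous out :=
    ((continuous_id.sub continuous_const).max continuous_const).add
      ((continuous_id.add continuous_const).min continuous_const)
  have out_mono : Monotone out := by
    intro x y hxy
    exact add_le_add (max_le_max (by linarith) le_rfl) (min_le_min (by linarith) le_rfl)
  have out_zero : ∀ x ∈ A, out x = 0 := by
    intro x hx
    have hxR := hR.2 hx
    rw [Real.closedBall_eq_Icc, mem_Icc] at hxR
    simp only [hout]
    rw [max_eq_right (by linarith [hxR.2]), min_eq_right (by linarith [hxR.1])]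
    ring
  set φt : ℝ → ℝ := fun x => φ0 x + out x with hφt
  have φt_cont : Continuous φt := φ0_cont.add out_cont
  have φt_strict : StrictMono φt := fun x y h =>
    add_lt_add_of_lt_of_le (φ0_strict h) (out_mono h.le)
  have φt_lb : ∀ x, -R ≤ x → x - R ≤ φt x := by
    intro x hxR
    have h1 : x - R ≤ max (x - R) 0 := le_max_left _ _
    have h2 : min (x + R) 0 = 0 := min_eq_right (by linarith)
    simp only [hφt, hout]
    rw [h2]
    linarith [φ0_nonneg x]
  have φt_ub : ∀ x, x ≤ R → φt x ≤ M + (x + R) := by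
    intro x hxR
    have h1 : max (x - R) 0 = 0 := max_eq_right (by linarith)
    have h2 : min (x + R) 0 ≤ x + R := min_le_left _ _
    simp only [hφt, hout]
    rw [h1]
    linarith [φ0_le x]
  have hM0 : 0 ≤ M := tsum_nonneg (fun k => eps_nonneg _)
  have φt_surj : Function.Surjective φt := by
    intro y
    set b : ℝ := |y| + R + 1 with hb
    set a : ℝ := -(|y| + R + M + 1) with ha
    have h1 : φt a ≤ y := by
      have := φt_ub a (by simp only [ha]; linarith [abs_nonneg y, hR.1])
      have hy1 := neg_abs_le y
      simp only [ha] at this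
      linarith
    have h2 : y ≤ φt b := by
      have := φt_lb b (by simp only [hb]; linarith [abs_nonneg y, hR.1])
      have hy2 := le_abs_self y
      simp only [hb] at this
      linarith
    exact intermediate_value_univ a b φt_cont ⟨h1, h2⟩
  set φiso : ℝ ≃o ℝ := StrictMono.orderIsoOfSurjective φt φt_strict φt_surj with hφiso
  refine ⟨φiso.toHomeomorph, fun x => fun k => if d k x = 1 then true else false, ?_⟩
  intro x hx
  have hcoe : (φiso.toHomeomorph : ℝ → ℝ) x = φt x := rfl
  rw [hcoe]
  have : φt x = φ0 x := by
    simp only [hφt]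
    rw [out_zero x hx]
    ring
  rw [this]
  simp only [hφ0, embA]
  apply tsum_congr
  intro k
  rcases d_A k x hx with h0 | h1
  · simp [h0]
  · simp [h1]

end Straighten

section Ext

lemma cantor_emb_ext (C : Set ℝ) (h : IsCantorSet C) (ν : ℕ → ℕ) (hν : ∀ k, k ≤ ν k) :
    ∃ f : ℝ → ℝ, Continuous f ∧ ∃ β : ↥C → (ℕ → Bool), Function.Injective β ∧
      ∀ x : ↥C, f x = embA ν (β x) := by
  obtain ⟨e⟩ := h
  have hcl : IsClosed C := (cantor_compact C ⟨e⟩).isClosed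
  set F : C(↥C, ℝ) := ⟨fun x => embA ν (e x), (embA_continuous ν hν).comp e.continuous⟩ with hF
  obtain ⟨g, hg⟩ := ContinuousMap.exists_restrict_eq hcl F
  refine ⟨g, g.continuous, e, e.injective, ?_⟩
  intro x
  have := congrFun (congrArg (fun h => h.toFun) hg) x
  simpa [hF] using this

lemma recovery {X : Type*} [TopologicalSpace X] [T2Space X] (S : Set X) (hS : IsCompact S)
    (σ G : X → ℝ) (hσ : Continuous σ) (hG : Continuous G)
    (hfac : ∀ x ∈ S, ∀ y ∈ S, σ x = σ y → G x = G y) :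
    ∃ g : ℝ → ℝ, Continuous g ∧ ∀ x ∈ S, g (σ x) = G x := by
  classical
  set K : Set ℝ := σ '' S with hK
  have hKc : IsCompact K := hS.image hσ
  haveI : CompactSpace ↥S := isCompact_iff_compactSpace.mp hS
  set p : ↥S → ↥K := fun x => ⟨σ x, mem_image_of_mem σ x.2⟩ with hp
  have pcont : Continuous p := (hσ.comp continuous_subtype_val).subtype_mk _
  have psurj : Function.Surjective p := by
    rintro ⟨t, ht⟩
    obtain ⟨x, hx, hxe⟩ := ht
    exact ⟨⟨x, hx⟩, Subtype.ext hxe⟩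
  have hq : IsQuotientMap p := (pcont.isClosedMap).isQuotientMap pcont psurj
  set q : ↥K → ℝ := fun t => G ((psurj t).choose : ↥S) with hq'
  have hqp : ∀ x : ↥S, q (p x) = G x := by
    intro x
    have hw : p ((psurj (p x)).choose) = p x := (psurj (p x)).choose_spec
    have hσw : σ ((psurj (p x)).choose : ↥S) = σ x := congrArg Subtype.val hw
    exact hfac _ ((psurj (p x)).choose).2 _ x.2 hσw
  have qcont : Continuous q := by
    rw [hq.continuous_iff]
    have : q ∘ p = fun x : ↥S => G x := funext hqp
    rw [this]
    exact hG.comp continuous_subtype_val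
  obtain ⟨g, hg⟩ := ContinuousMap.exists_restrict_eq hKc.isClosed (⟨q, qcont⟩ : C(↥K, ℝ))
  refine ⟨g, g.continuous, ?_⟩
  intro x hx
  have h1 := congrFun (congrArg (fun h => h.toFun) hg) (p ⟨x, hx⟩)
  have h2 := hqp ⟨x, hx⟩
  simpa using h1.trans h2

end Ext

section Shears
variable {n : ℕ} [NeZero n]

def shearAcc (c : (Fin n → ℝ) → ℝ) (hc : Continuous c)
    (hci : ∀ x t, c (Function.update x 0 t) = c x) :
    (Fin n → ℝ) ≃ₜ (Fin n → ℝ) :=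
  Homeomorph.mk
    ⟨fun x => Function.update x 0 (x 0 + c x),
     fun y => Function.update y 0 (y 0 - c y),
     by
      intro x
      show Function.update (Function.update x 0 (x 0 + c x)) 0
        (Function.update x 0 (x 0 + c x) 0 - c (Function.update x 0 (x 0 + c x))) = x
      rw [Function.update_idem, Function.update_self, hci]
      rw [show x 0 + c x - c x = x 0 by ring, Function.update_eq_self],
     by
      intro y
      show Function.update (Function.update y 0 (y 0 - c y)) 0
        (Function.update y 0 (y 0 - c y) 0 + c (Function.update y 0 (y 0 - c y))) = y
      rw [Function.update_idem, Function.update_self, hci]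
      rw [show y 0 - c y + c y = y 0 by ring, Function.update_eq_self]⟩
    (continuous_id.update 0 ((continuous_apply 0).add hc))
    (continuous_id.update 0 ((continuous_apply 0).sub hc))

lemma shearAcc_apply_zero (c : (Fin n → ℝ) → ℝ) (hc : Continuous c)
    (hci : ∀ x t, c (Function.update x 0 t) = c x) (x : Fin n → ℝ) :
    shearAcc c hc hci x 0 = x 0 + c x := by
  show Function.update x 0 (x 0 + c x) 0 = x 0 + c x
  exact Function.update_self _ _ _

lemma shearAcc_apply_ne (c : (Fin n → ℝ) → ℝ) (hc : Continuous c)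
    (hci : ∀ x t, c (Function.update x 0 t) = c x) (x : Fin n → ℝ) {i : Fin n} (hi : i ≠ 0) :
    shearAcc c hc hci x i = x i := by
  show Function.update x 0 (x 0 + c x) i = x i
  exact Function.update_of_ne hi _ _

def shearBack (g : Fin n → ℝ → ℝ) (hg : ∀ i, Continuous (g i)) :
    (Fin n → ℝ) ≃ₜ (Fin n → ℝ) :=
  Homeomorph.mk
    ⟨fun y => fun i => if i = 0 then y 0 else y i - g i (y 0),
     fun z => fun i => if i = 0 then z 0 else z i + g i (z 0),
     by
      intro y
      funext i
      by_cases h : i = 0 <;> simp [h],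
     by
      intro z
      funext i
      by_cases h : i = 0 <;> simp [h]⟩
    (by
      apply continuous_pi
      intro i
      by_cases h : i = 0
      · simpa [h] using (continuous_apply (0 : Fin n))
      · simp only [if_neg h]
        exact (continuous_apply i).sub ((hg i).comp (continuous_apply 0)))
    (by
      apply continuous_pi
      intro i
      by_cases h : i = 0
      · simpa [h] using (continuous_apply (0 : Fin n))
      · simp only [if_neg h]
        exact (continuous_apply i).add ((hg i).comp (continuous_apply 0)))

lemma shearBack_apply_zero (g : Fin n → ℝ → ℝ) (hg : ∀ i, Continuous (g i)) (y : Fin n → ℝ) :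
    shearBack g hg y 0 = y 0 := by
  show (if (0 : Fin n) = 0 then y 0 else y 0 - g 0 (y 0)) = y 0
  exact if_pos rfl

lemma shearBack_apply_ne (g : Fin n → ℝ → ℝ) (hg : ∀ i, Continuous (g i)) (y : Fin n → ℝ)
    {i : Fin n} (hi : i ≠ 0) : shearBack g hg y i = y i - g i (y 0) := by
  show (if i = 0 then y 0 else y i - g i (y 0)) = y i - g i (y 0)
  exact if_neg hi

end Shears

section Cube
variable {n : ℕ}

def piSubtypeHomeo (C : Fin n → Set ℝ) :
    ↥{x : Fin n → ℝ | ∀ i, x i ∈ C i} ≃ₜ (∀ i, ↥(C i)) :=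
  Homeomorph.mk
    ⟨fun x i => ⟨x.1 i, x.2 i⟩,
     fun y => ⟨fun i => (y i).1, fun i => (y i).2⟩,
     fun x => Subtype.ext (funext fun i => rfl),
     fun y => funext fun i => Subtype.ext rfl⟩
    (continuous_pi fun i => (Continuous.subtype_mk ((continuous_apply i).comp continuous_subtype_val) _))
    (Continuous.subtype_mk (continuous_pi fun i => continuous_subtype_val.comp (continuous_apply i)) _)

def curryHomeo (n : ℕ) : (∀ _ : Fin n, (ℕ → Bool)) ≃ₜ (Fin n × ℕ → Bool) :=
  Homeomorph.mk
    ⟨fun y p => y p.1 p.2, fun f i k => f (i, k), fun y => rfl, fun f => rfl⟩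
    (continuous_pi fun p => (continuous_apply p.2).comp (continuous_apply p.1))
    (continuous_pi fun i => continuous_pi fun k => continuous_apply (i, k))

end Cube

lemma sum_split0 {n : ℕ} [NeZero n] (t : Fin n → ℝ) :
    ∑ i : Fin n, t i = t 0 + ∑ i : Fin n, if i = 0 then 0 else t i := by
  have h1 : ∀ i : Fin n, t i = (if i = 0 then t 0 else 0) + (if i = 0 then 0 else t i) := by
    intro i; by_cases h : i = 0 <;> simp [h]
  rw [Finset.sum_congr rfl (fun i _ => h1 i), Finset.sum_add_distrib]
  congr 1
  simp


end Stmt12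

open Stmt12

/-- The product of `n` Cantor sets in `ℝ` is a tame Cantor set in `ℝⁿ`. -/
theorem stmt12 (n : ℕ) (hn : 1 ≤ n) (C : Fin n → Set ℝ)
    (hC : ∀ i, IsCantorSet (C i)) :
    IsTameCantorSet {x : Fin n → ℝ | ∀ i, x i ∈ C i} := by
  classical
  haveI : NeZero n := ⟨by omega⟩
  have npos : 0 < n := hn
  set S : Set (Fin n → ℝ) := {x : Fin n → ℝ | ∀ i, x i ∈ C i} with hS
  have hSmem : ∀ x, x ∈ S → ∀ i, x i ∈ C i := fun x hx => hx
  have hSpi : S = Set.pi univ C := by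
    ext x; simp [hS, Set.mem_pi]
  have hScomp : IsCompact S := by
    rw [hSpi]; exact isCompact_univ_pi (fun i => cantor_compact _ (hC i))
  constructor
  · -- Cantor set
    haveI : Nonempty (Fin n) := ⟨⟨0, npos⟩⟩
    haveI := Denumerable.ofEncodableOfInfinite (Fin n × ℕ)
    exact ⟨(piSubtypeHomeo C).trans ((Homeomorph.piCongrRight (fun i => (hC i).some)).trans
      ((curryHomeo n).trans
        (Homeomorph.piCongrLeft (Y := fun _ : ℕ => Bool) (Denumerable.eqv (Fin n × ℕ)))))⟩
  · -- tameness
    obtain ⟨φ, β0, hφβ⟩ := straighten (C 0) (cantor_compact _ (hC 0))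
      (cantor_interior_empty _ (hC 0))
      (fun k => k * n + ((0 : Fin n) : ℕ)) (nu_ge n npos 0)
    have hext := fun i : Fin n =>
      cantor_emb_ext (C i) (hC i) (fun k => k * n + (i : ℕ)) (nu_ge n npos i)
    choose f hfc β hβinj hfβ using hext
    set F : Fin n → ℝ → ℝ := fun i => if i = 0 then ⇑φ else f i with hF
    have hFc : ∀ i, Continuous (F i) := by
      intro i; simp only [hF]; split
      · exact φ.continuous
      · exact hfc i
    set σ : (Fin n → ℝ) → ℝ := fun x => ∑ i : Fin n, F i (x i) with hσ
    have hσc : Continuous σ :=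
      continuous_finset_sum _ (fun i _ => (hFc i).comp (continuous_apply i))
    have hdig : ∀ x (hx : x ∈ S), σ x = ∑ i : Fin n,
        embA (fun k => k * n + (i : ℕ))
          ((fun i : Fin n => if h : i = (0 : Fin n) then β0 (x 0) else β i ⟨x i, hSmem x hx i⟩) i) := by
      intro x hx
      apply Finset.sum_congr rfl
      intro i _
      by_cases h : i = 0
      · subst h
        simp only [dif_pos, hF, if_pos rfl]
        exact hφβ (x 0) (hSmem x hx 0)
      · simp only [dif_neg h, hF, if_neg h]
        exact hfβ i ⟨x i, hSmem x hx i⟩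
    have hsep : ∀ i : Fin n, i ≠ 0 → ∀ x ∈ S, ∀ y ∈ S, σ x = σ y → x i = y i := by
      intro i hi x hx y hy hxy
      have hkey := key npos _ _ ((hdig x hx).symm.trans (hxy.trans (hdig y hy)))
      have h2 := congrFun hkey i
      simp only [dif_neg hi] at h2
      exact congrArg Subtype.val (hβinj i h2)
    have hrec : ∀ i : Fin n, ∃ g : ℝ → ℝ, Continuous g ∧ (i ≠ 0 → ∀ x ∈ S, g (σ x) = x i) := by
      intro i
      by_cases hi : i = 0
      · exact ⟨id, continuous_id, fun h => absurd hi h⟩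
      · obtain ⟨g, hgc, hgp⟩ := recovery S hScomp σ (fun x => x i) hσc (continuous_apply i)
          (fun x hx y hy h => hsep i hi x hx y hy h)
        exact ⟨g, hgc, fun _ => hgp⟩
    choose g hgc hgp using hrec
    set H0 : (Fin n → ℝ) ≃ₜ (Fin n → ℝ) :=
      Homeomorph.piCongrRight (fun i => if i = 0 then φ else Homeomorph.refl ℝ) with hH0
    have hH0ne : ∀ x, ∀ i : Fin n, i ≠ 0 → H0 x i = x i := by
      intro x i hi
      show (if i = 0 then φ else Homeomorph.refl ℝ) (x i) = x i
      rw [if_neg hi]; rfl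
    have hH0z : ∀ x, H0 x 0 = φ (x 0) := by
      intro x
      show (if (0 : Fin n) = 0 then φ else Homeomorph.refl ℝ) (x 0) = φ (x 0)
      rw [if_pos rfl]
    set c : (Fin n → ℝ) → ℝ := fun x => ∑ i : Fin n, if i = 0 then 0 else F i (x i) with hc'
    have hcc : Continuous c := by
      apply continuous_finset_sum
      intro i _
      by_cases h : i = 0
      · simp only [if_pos h]
        · exact continuous_const
      · simp only [if_neg h]
        exact (hFc i).comp (continuous_apply i)
    have hci : ∀ x t, c (Function.update x 0 t) = c x := by
      intro x t
      apply Finset.sum_congr rfl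
      intro i _
      by_cases h : i = 0
      · simp [h]
      · rw [if_neg h, if_neg h, Function.update_of_ne h]
    set H1 := shearAcc c hcc hci with hH1
    set H2 := shearBack g hgc with hH2
    refine ⟨(H0.trans H1).trans H2, ?_⟩
    rintro w ⟨x, hx, rfl⟩
    intro i hipos
    have hi : i ≠ 0 := by
      intro h
      rw [h] at hipos
      simp at hipos
    have happ : ((H0.trans H1).trans H2) x = H2 (H1 (H0 x)) := rfl
    rw [happ]
    have hzero : (H1 (H0 x)) 0 = σ x := by
      rw [hH1, shearAcc_apply_zero, hH0z]
      have hcH0 : c (H0 x) = ∑ j : Fin n, if j = 0 then 0 else F j (x j) := by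
        apply Finset.sum_congr rfl
        intro j _
        by_cases h : j = 0
        · simp [h]
        · rw [if_neg h, if_neg h, hH0ne x j h]
      rw [hcH0]
      have hsplitσ : σ x = F 0 (x 0) + ∑ j : Fin n, if j = 0 then 0 else F j (x j) :=
        sum_split0 (fun j => F j (x j))
      rw [hsplitσ]
      simp only [hF, if_pos rfl]
    have hstep : (H1 (H0 x)) i = x i := by
      rw [hH1, shearAcc_apply_ne c hcc hci _ hi, hH0ne x i hi]
    rw [hH2, shearBack_apply_ne g hgc _ hi, hstep, hzero, hgp i hi x hx]
    ring

end
end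

section
/- For each ε > 0, each compact nowhere dense subset C ⊆ ℝ and each open dense subset U ⊆ ℝ, there is a homeomorphism h : ℝ → ℝ such that h(C) ⊆ U and sup_{x∈ℝ} |h(x) − x| < ε. -/
open Set Filter

/-! Piecewise linear map with nodes a ↦ a, P ↦ c, Q ↦ d, b ↦ b, identity outside. -/

noncomputable def pl (a P Q b c d : ℝ) (x : ℝ) : ℝ :=
  if x ≤ a then x
  else if x ≤ P then a + (x - a) * ((c - a) / (P - a))
  else if x ≤ Q then c + (x - P) * ((d - c) / (Q - P))
  else if x ≤ b then d + (x - Q) * ((b - d) / (b - Q))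
  else x

section pl

variable {a P Q b c d : ℝ} (h1 : a < P) (h2 : P < Q) (h3 : Q < b)
  (h4 : a < c) (h5 : c < d) (h6 : d < b)

lemma pl_left {x : ℝ} (h : x ≤ a) : pl a P Q b c d x = x := if_pos h

include h1 h2 h3 in
lemma pl_right {x : ℝ} (h : b ≤ x) : pl a P Q b c d x = x := by
  rcases eq_or_lt_of_le h with rfl | h'
  · have hQ : (b - Q) ≠ 0 := by linarith
    simp only [pl, if_neg (by linarith : ¬ (b:ℝ) ≤ a), if_neg (by linarith : ¬ (b:ℝ) ≤ P),
      if_neg (by linarith : ¬ (b:ℝ) ≤ Q), if_pos le_rfl]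
    field_simp
    ring
  · simp only [pl, if_neg (by linarith : ¬ x ≤ a), if_neg (by linarith : ¬ x ≤ P),
      if_neg (by linarith : ¬ x ≤ Q), if_neg (by linarith : ¬ x ≤ b)]

include h1 in
lemma pl_piece1 {x : ℝ} (hx : x ∈ Icc a P) :
    pl a P Q b c d x = a + (x - a) * ((c - a) / (P - a)) := by
  by_cases g : x ≤ a
  · have hxa : x = a := le_antisymm g hx.1
    rw [pl_left g, hxa]
    ring
  · simp only [pl, if_neg g, if_pos hx.2]

include h1 h2 h4 in
lemma pl_piece2 {x : ℝ} (hx : x ∈ Icc P Q) :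
    pl a P Q b c d x = c + (x - P) * ((d - c) / (Q - P)) := by
  by_cases g : x ≤ P
  · have hxP : x = P := le_antisymm g hx.1
    have hPa : (P - a) ≠ 0 := by linarith
    rw [hxP]
    simp only [pl, if_neg (by linarith : ¬ P ≤ a), if_pos le_rfl]
    field_simp
    ring
  · simp only [pl, if_neg (by linarith : ¬ x ≤ a), if_neg g, if_pos hx.2]

include h1 h2 h3 h4 h5 in
lemma pl_piece3 {x : ℝ} (hx : x ∈ Icc Q b) :
    pl a P Q b c d x = d + (x - Q) * ((b - d) / (b - Q)) := by
  by_cases g : x ≤ Q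
  · have hxQ : x = Q := le_antisymm g hx.1
    have hQP : (Q - P) ≠ 0 := by linarith
    rw [hxQ]
    simp only [pl, if_neg (by linarith : ¬ Q ≤ a), if_neg (by linarith : ¬ Q ≤ P), if_pos le_rfl]
    field_simp
    ring
  · simp only [pl, if_neg (by linarith : ¬ x ≤ a), if_neg (by linarith : ¬ x ≤ P), if_neg g,
      if_pos hx.2]

private lemma strictMono_glue {f : ℝ → ℝ} {c₀ : ℝ} (hl : StrictMonoOn f (Iic c₀))
    (hr : StrictMonoOn f (Ici c₀)) : StrictMono f := by
  intro x y hxy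
  rcases le_total y c₀ with h | h
  · exact hl (mem_Iic.2 (hxy.le.trans h)) (mem_Iic.2 h) hxy
  rcases le_total x c₀ with h' | h'
  · rcases eq_or_lt_of_le h' with rfl | hx
    · exact hr (mem_Ici.2 le_rfl) (mem_Ici.2 h) hxy
    · have f1 : f x < f c₀ := hl (mem_Iic.2 h') (mem_Iic.2 le_rfl) hx
      rcases eq_or_lt_of_le h with rfl | hy
      · exact f1
      · exact f1.trans (hr (mem_Ici.2 le_rfl) (mem_Ici.2 h) hy)
  · exact hr (mem_Ici.2 h') (mem_Ici.2 (h'.trans hxy.le)) hxy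

private lemma strictMonoOn_glue {f : ℝ → ℝ} {a₀ c₀ : ℝ} (hac : a₀ ≤ c₀)
    (hl : StrictMonoOn f (Icc a₀ c₀)) (hr : StrictMonoOn f (Ici c₀)) :
    StrictMonoOn f (Ici a₀) := by
  intro x hx y hy hxy
  rcases le_total y c₀ with h | h
  · exact hl ⟨hx, hxy.le.trans h⟩ ⟨hy, h⟩ hxy
  rcases le_total x c₀ with h' | h'
  · rcases eq_or_lt_of_le h' with rfl | hx'
    · exact hr (mem_Ici.2 le_rfl) (mem_Ici.2 h) hxy
    · have f1 : f x < f c₀ := hl ⟨hx, h'⟩ ⟨hac, le_rfl⟩ hx'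
      rcases eq_or_lt_of_le h with rfl | hy'
      · exact f1
      · exact f1.trans (hr (mem_Ici.2 le_rfl) (mem_Ici.2 h) hy')
  · exact hr (mem_Ici.2 h') (mem_Ici.2 (h'.trans hxy.le)) hxy

private lemma affine_sm {A B s : ℝ} (hs : 0 < s) : StrictMono (fun x => A + (x - B) * s) := by
  intro u v h
  simp only
  nlinarith

include h1 h2 h3 h4 h5 h6 in
lemma pl_strictMono : StrictMono (pl a P Q b c d) := by
  have s1 : (0:ℝ) < (c - a) / (P - a) := div_pos (by linarith) (by linarith)
  have s2 : (0:ℝ) < (d - c) / (Q - P) := div_pos (by linarith) (by linarith)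
  have s3 : (0:ℝ) < (b - d) / (b - Q) := div_pos (by linarith) (by linarith)
  apply strictMono_glue (c₀ := a)
  · intro x hx y hy hxy
    rw [pl_left hx, pl_left hy]; exact hxy
  apply strictMonoOn_glue h1.le
  · intro x hx y hy hxy
    rw [pl_piece1 h1 hx, pl_piece1 h1 hy]
    exact affine_sm s1 hxy
  apply strictMonoOn_glue h2.le
  · intro x hx y hy hxy
    rw [pl_piece2 h1 h2 h4 hx, pl_piece2 h1 h2 h4 hy]
    exact affine_sm s2 hxy
  apply strictMonoOn_glue h3.le
  · intro x hx y hy hxy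
    rw [pl_piece3 h1 h2 h3 h4 h5 hx, pl_piece3 h1 h2 h3 h4 h5 hy]
    exact affine_sm s3 hxy
  · intro x hx y hy hxy
    rw [pl_right h1 h2 h3 hx, pl_right h1 h2 h3 hy]; exact hxy

include h1 h2 h3 h4 h5 h6 in
lemma pl_continuous : Continuous (pl a P Q b c d) := by
  unfold pl
  refine Continuous.if_le continuous_id ?_ continuous_id continuous_const fun x hx => ?_
  · refine Continuous.if_le (by fun_prop) ?_ continuous_id continuous_const fun x hx => ?_
    · refine Continuous.if_le (by fun_prop) ?_ continuous_id continuous_const fun x hx => ?_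
      · refine Continuous.if_le (by fun_prop) continuous_id continuous_id continuous_const
          fun x hx => ?_
        have hbQ : (b - Q) ≠ 0 := by linarith
        rw [hx]
        field_simp
        ring
      · have hQP : (Q - P) ≠ 0 := by linarith
        rw [hx, if_pos h3.le]
        field_simp
        ring
    · have hPa : (P - a) ≠ 0 := by linarith
      rw [hx, if_pos h2.le]
      field_simp
      ring
  · rw [hx, if_pos h1.le]
    ring

include h1 h2 h3 h4 h5 h6 in
lemma pl_surjective : Function.Surjective (pl a P Q b c d) := by
  apply (pl_continuous h1 h2 h3 h4 h5 h6).surjective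
  · apply Tendsto.congr' _ tendsto_id
    filter_upwards [eventually_ge_atTop b] with x hx
    exact (pl_right h1 h2 h3 hx).symm
  · apply Tendsto.congr' _ tendsto_id
    filter_upwards [eventually_le_atBot a] with x hx
    exact (pl_left hx).symm

include h1 h2 h3 h4 h5 h6 in
lemma pl_mid {x : ℝ} (hx : x ∈ Icc P Q) : pl a P Q b c d x ∈ Icc c d := by
  rw [pl_piece2 h1 h2 h4 hx]
  have hs : (0:ℝ) < (d - c) / (Q - P) := div_pos (by linarith) (by linarith)
  have hne : Q - P ≠ 0 := by linarith
  have key : (Q - P) * ((d - c) / (Q - P)) = d - c := by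
    rw [mul_comm, div_mul_cancel₀ _ hne]
  have e1 : (x - P) * ((d - c) / (Q - P)) ≤ (Q - P) * ((d - c) / (Q - P)) :=
    mul_le_mul_of_nonneg_right (by linarith [hx.2]) hs.le
  constructor
  · nlinarith [hx.1]
  · linarith

noncomputable def plHomeo (h1 : a < P) (h2 : P < Q) (h3 : Q < b) (h4 : a < c) (h5 : c < d)
    (h6 : d < b) : ℝ ≃ₜ ℝ :=
  (StrictMono.orderIsoOfSurjective _ (pl_strictMono h1 h2 h3 h4 h5 h6)
    (pl_surjective h1 h2 h3 h4 h5 h6)).toHomeomorph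

lemma plHomeo_apply (x : ℝ) : plHomeo h1 h2 h3 h4 h5 h6 x = pl a P Q b c d x := rfl

include h1 h2 h3 h4 h5 h6 in
lemma pl_maps_Ioo {x : ℝ} (hx : x ∈ Ioo a b) : pl a P Q b c d x ∈ Ioo a b := by
  have ha : pl a P Q b c d a = a := pl_left le_rfl
  have hb : pl a P Q b c d b = b := pl_right h1 h2 h3 le_rfl
  have hm := pl_strictMono h1 h2 h3 h4 h5 h6
  constructor
  · have := hm hx.1; rwa [ha] at this
  · have := hm hx.2; rwa [hb] at this

end pl

/-- Local move: a homeomorphism supported in `Ioo a b` pushing a compact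
`K ⊆ Ioo a b` into the open dense set `U`. -/
lemma local_move {a b : ℝ} (hab : a < b) {K : Set ℝ} (hK : IsCompact K)
    (hKsub : K ⊆ Ioo a b) {U : Set ℝ} (hU : IsOpen U) (hUd : Dense U) :
    ∃ g : ℝ ≃ₜ ℝ, (∀ x, x ∉ Ioo a b → g x = x) ∧ (∀ x ∈ Ioo a b, g x ∈ Ioo a b) ∧
      ∀ x ∈ K, g x ∈ U := by
  obtain ⟨u, hu⟩ := hUd.inter_open_nonempty (Ioo a b) isOpen_Ioo (nonempty_Ioo.2 hab)
  have hV : IsOpen (Ioo a b ∩ U) := isOpen_Ioo.inter hU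
  obtain ⟨r, hr, hball⟩ := Metric.isOpen_iff.1 hV u hu
  set c := u - r/2 with hc
  set d := u + r/2 with hd
  have hcd : Icc c d ⊆ Ioo a b ∩ U := by
    intro y hy
    apply hball
    rw [Real.ball_eq_Ioo]
    have h1 : c ≤ y := hy.1
    have h2 : y ≤ d := hy.2
    constructor
    · rw [hc] at h1; linarith
    · rw [hd] at h2; linarith
  have hc1 := hcd (left_mem_Icc.2 (by rw [hc, hd]; linarith))
  have hc2 := hcd (right_mem_Icc.2 (by rw [hc, hd]; linarith))
  have hac : a < c := hc1.1.1
  have hcd' : c < d := by rw [hc, hd]; linarith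
  have hdb : d < b := hc2.1.2
  have hPQ : ∃ P Q : ℝ, a < P ∧ P < Q ∧ Q < b ∧ K ⊆ Icc P Q := by
    rcases K.eq_empty_or_nonempty with rfl | hKne
    · exact ⟨c, d, hac, hcd', hdb, empty_subset _⟩
    · have hp := hK.sInf_mem hKne
      have hq := hK.sSup_mem hKne
      have hpI := hKsub hp
      have hqI := hKsub hq
      have hpq : sInf K ≤ sSup K := csInf_le_csSup hKne hK.bddBelow hK.bddAbove
      refine ⟨(a + sInf K)/2, (sSup K + b)/2, by linarith [hpI.1], ?_, by linarith [hqI.2], ?_⟩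
      · linarith [hpI.1, hqI.2]
      · intro x hx
        have l1 := csInf_le hK.bddBelow hx
        have l2 := le_csSup hK.bddAbove hx
        exact ⟨by linarith [hpI.1], by linarith [hqI.2]⟩
  obtain ⟨P, Q, h1, h2, h3, hKPQ⟩ := hPQ
  refine ⟨plHomeo h1 h2 h3 hac hcd' hdb, ?_, ?_, ?_⟩
  · intro x hx
    rw [plHomeo_apply]
    rcases le_or_gt x a with h | h
    · exact pl_left h
    · have hbx : b ≤ x := by
        by_contra hbx
        exact hx ⟨h, lt_of_not_ge hbx⟩
      exact pl_right h1 h2 h3 hbx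
  · intro x hx
    rw [plHomeo_apply]
    exact pl_maps_Ioo h1 h2 h3 hac hcd' hdb hx
  · intro x hx
    rw [plHomeo_apply]
    have := pl_mid h1 h2 h3 hac hcd' hdb (hKPQ hx)
    exact (hcd this).2


/-- For each `ε > 0`, each compact nowhere dense `C ⊆ ℝ` and each open dense
`U ⊆ ℝ` there is a homeomorphism `h : ℝ → ℝ` with `h(C) ⊆ U` and
`sup_{x ∈ ℝ} |h(x) - x| < ε`. -/
theorem stmt13 (ε : ℝ) (hε : 0 < ε) (C : Set ℝ) (hCc : IsCompact C)
    (hCnd : IsNowhereDense C) (U : Set ℝ) (hU : IsOpen U) (hUd : Dense U) :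
    ∃ h : ℝ ≃ₜ ℝ, (⇑h) '' C ⊆ U ∧ ∃ δ : ℝ, δ < ε ∧ ∀ x : ℝ, |h x - x| ≤ δ := by
  rcases C.eq_empty_or_nonempty with rfl | hCne
  · refine ⟨Homeomorph.refl ℝ, by simp, ε/2, by linarith, fun x => ?_⟩
    simp only [Homeomorph.refl_apply, id_eq, sub_self, abs_zero]
    positivity
  obtain ⟨lo, hlo⟩ := hCc.bddBelow
  obtain ⟨hi, hhi⟩ := hCc.bddAbove
  have hCd : Dense Cᶜ := by
    rw [← interior_eq_empty_iff_dense_compl]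
    have h : interior (closure C) = ∅ := hCnd
    rwa [hCc.isClosed.closure_eq] at h
  set ε' := ε / 5 with hε'
  have hε'pos : 0 < ε' := by positivity
  have step : ∀ t : ℝ, ∃ s : ℝ, s ∈ Ioo (t + ε') (t + 2*ε') ∧ s ∉ C := by
    intro t
    obtain ⟨s, hs⟩ := hCd.inter_open_nonempty (Ioo (t+ε') (t+2*ε')) isOpen_Ioo
      (nonempty_Ioo.2 (by linarith))
    exact ⟨s, hs.1, hs.2⟩
  choose f hf1 hf2 using step
  set A : ℕ → ℝ := fun n => f^[n] (lo - 1) with hA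
  have hA0 : A 0 = lo - 1 := rfl
  have hAsucc : ∀ n, A (n+1) = f (A n) := fun n => Function.iterate_succ_apply' f n _
  have hstep1 : ∀ n, A n + ε' < A (n+1) := fun n => by rw [hAsucc]; exact (hf1 (A n)).1
  have hstep2 : ∀ n, A (n+1) < A n + 2*ε' := fun n => by rw [hAsucc]; exact (hf1 (A n)).2
  have hAnotC : ∀ n, A n ∉ C := by
    intro n
    cases n with
    | zero =>
      intro hmem
      have := hlo hmem
      rw [hA0] at this
      linarith
    | succ n => rw [hAsucc]; exact hf2 (A n)
  have hmono : StrictMono A := strictMono_nat_of_lt_succ (fun n => by linarith [hstep1 n])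
  have hgrow : ∀ n : ℕ, lo - 1 + n * ε' ≤ A n := by
    intro n
    induction n with
    | zero => simp [hA0]
    | succ n ih =>
      have := hstep1 n
      push_cast
      push_cast at ih
      linarith
  obtain ⟨N, hN⟩ : ∃ N : ℕ, hi < A N := by
    obtain ⟨N, hN⟩ := exists_nat_gt ((hi - (lo - 1))/ε')
    refine ⟨N, ?_⟩
    have := hgrow N
    rw [div_lt_iff₀ hε'pos] at hN
    linarith
  have hcover : ∀ x ∈ C, ∃ k < N, x ∈ Ioo (A k) (A (k+1)) := by
    intro x hx
    have hx0 : A 0 < x := by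
      have := hlo hx
      rw [hA0]
      linarith
    have hxN : x < A N := lt_of_le_of_lt (hhi hx) hN
    have key : ∀ n, x < A n → ∃ k < n, A k < x ∧ x < A (k+1) := by
      intro n
      induction n with
      | zero => intro h1; exact absurd (h1.trans hx0) (lt_irrefl x)
      | succ n ih =>
        intro h1
        by_cases hc : x < A n
        · obtain ⟨k, hk, h⟩ := ih hc
          exact ⟨k, Nat.lt_succ_of_lt hk, h⟩
        · push_neg at hc
          have hAn : A n < x := lt_of_le_of_ne hc (fun h => hAnotC n (h ▸ hx))
          exact ⟨n, Nat.lt_succ_self n, hAn, h1⟩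
    obtain ⟨k, hk, ha, hb⟩ := key N hxN
    exact ⟨k, hk, ha, hb⟩
  have hKc : ∀ k : ℕ, IsCompact (C ∩ Icc (A k) (A (k+1))) :=
    fun k => hCc.inter_right isClosed_Icc
  have hKsub : ∀ k : ℕ, C ∩ Icc (A k) (A (k+1)) ⊆ Ioo (A k) (A (k+1)) := by
    rintro k x ⟨hxC, hxI⟩
    constructor
    · exact lt_of_le_of_ne hxI.1 (fun h => hAnotC k (h ▸ hxC))
    · exact lt_of_le_of_ne hxI.2 (fun h => hAnotC (k+1) (by rw [← h]; exact hxC))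
  have hglt : ∀ k : ℕ, A k < A (k+1) := fun k => hmono (Nat.lt_succ_self k)
  have hg : ∀ k : ℕ, ∃ g : ℝ ≃ₜ ℝ, (∀ x, x ∉ Ioo (A k) (A (k+1)) → g x = x) ∧
      (∀ x ∈ Ioo (A k) (A (k+1)), g x ∈ Ioo (A k) (A (k+1))) ∧
      ∀ x ∈ C ∩ Icc (A k) (A (k+1)), g x ∈ U :=
    fun k => local_move (hglt k) (hKc k) (hKsub k) hU hUd
  choose g hg1 hg2 hg3 using hg
  set H : ℕ → ℝ ≃ₜ ℝ := fun n => Nat.rec (Homeomorph.refl ℝ) (fun k Hk => Hk.trans (g k)) n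
    with hH
  have hHsucc : ∀ (n : ℕ) (x : ℝ), H (n+1) x = g n (H n x) := fun n x => rfl
  have hdisj : ∀ j k : ℕ, j < k →
      Disjoint (Ioo (A j) (A (j+1))) (Ioo (A k) (A (k+1))) := by
    intro j k hjk
    rw [Set.disjoint_left]
    rintro x ⟨_, hx2⟩ ⟨hx3, _⟩
    have : A (j+1) ≤ A k := hmono.monotone hjk
    linarith
  have hfix : ∀ (n : ℕ) (x : ℝ), (∀ k < n, x ∉ Ioo (A k) (A (k+1))) → H n x = x := by
    intro n
    induction n with
    | zero => intro x _; rfl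
    | succ n ih =>
      intro x hx
      rw [hHsucc, ih x (fun k hk => hx k (Nat.lt_succ_of_lt hk))]
      exact hg1 n x (hx n (Nat.lt_succ_self n))
  have hmove : ∀ n, ∀ k < n, ∀ x ∈ Ioo (A k) (A (k+1)), H n x = g k x := by
    intro n
    induction n with
    | zero => intro k hk; exact absurd hk (Nat.not_lt_zero k)
    | succ n ih =>
      intro k hk x hx
      rcases Nat.lt_succ_iff_lt_or_eq.1 hk with hk' | heq
      · rw [hHsucc, ih k hk' x hx]
        apply hg1 n
        intro hmem
        exact (Set.disjoint_left.1 (hdisj k n hk')) (hg2 k x hx) hmem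
      · subst heq
        rw [hHsucc, hfix k x ?_]
        intro j hj hmem
        exact (Set.disjoint_left.1 (hdisj j k hj)) hmem hx
  refine ⟨H N, ?_, 2*ε', by rw [hε']; linarith, ?_⟩
  · rintro _ ⟨x, hx, rfl⟩
    obtain ⟨k, hk, hxk⟩ := hcover x hx
    rw [hmove N k hk x hxk]
    exact hg3 k x ⟨hx, Ioo_subset_Icc_self hxk⟩
  · intro x
    by_cases hx : ∃ k < N, x ∈ Ioo (A k) (A (k+1))
    · obtain ⟨k, hk, hxk⟩ := hx
      rw [hmove N k hk x hxk]
      have h1 := hg2 k x hxk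
      have hlen := hstep2 k
      rw [abs_le]
      constructor
      · linarith [h1.1, hxk.2]
      · linarith [h1.2, hxk.1]
    · push_neg at hx
      rw [hfix N x hx]
      simp only [sub_self, abs_zero]
      positivity
end

section
/- Let n ≥ 1 and let Z ⊆ ℝ be a zero-dimensional (equivalently, totally disconnected) subspace of the real line. Then σK(Zⁿ) ⊆ σC₀; that is, every subset of Zⁿ ⊆ ℝⁿ that is contained in a countable union of compact subsets of Zⁿ belongs to the σ-ideal σC₀ on ℝⁿ. In particular, every compact subset K ⊆ ℝⁿ with K ⊆ Zⁿ is contained in a countable union of tame Cantor sets in ℝⁿ. -/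
open Set Cardinal

noncomputable section Stmt19Aux
namespace Stmt19Aux

def tw (m : ℕ) : ℝ := (3:ℝ)⁻¹ ^ (m+1)

lemma tw_pos (m : ℕ) : 0 < tw m := by simp only [tw]; positivity

def bitR (b : Bool) : ℝ := if b then 2 else 0

lemma bitR_nonneg (b : Bool) : 0 ≤ bitR b := by cases b <;> simp [bitR]
lemma bitR_le (b : Bool) : bitR b ≤ 2 := by cases b <;> simp [bitR]

lemma summable_tw : Summable tw := by
  have h : Summable (fun m : ℕ => (3:ℝ)⁻¹ ^ m) :=
    summable_geometric_of_lt_one (by norm_num) (by norm_num)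
  have := h.mul_left (3:ℝ)⁻¹
  apply this.congr
  intro m
  simp only [tw, pow_succ]
  ring

lemma summable_bit (a : ℕ → Bool) : Summable (fun m => bitR (a m) * tw m) := by
  apply Summable.of_nonneg_of_le (fun m => mul_nonneg (bitR_nonneg (a m)) (tw_pos m).le)
    (fun m => mul_le_mul_of_nonneg_right (bitR_le (a m)) (tw_pos m).le)
    (summable_tw.mul_left 2)

def cstd (a : ℕ → Bool) : ℝ := ∑' m, bitR (a m) * tw m

lemma tsum_tw_tail (k : ℕ) : ∑' i : ℕ, tw (i + (k+1)) = tw k / 2 := by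
  have h : ∀ i : ℕ, tw (i + (k+1)) = (3:ℝ)⁻¹ ^ (k+2) * ((3:ℝ)⁻¹) ^ i := by
    intro i; simp only [tw]; rw [← pow_add]; ring_nf
  rw [tsum_congr h, tsum_mul_left, tsum_geometric_of_lt_one (by norm_num) (by norm_num)]
  have : ((1:ℝ) - 3⁻¹)⁻¹ = 3/2 := by norm_num
  rw [this]
  simp only [tw, pow_succ, pow_add]
  ring

lemma cstd_gap {a b : ℕ → Bool} {k : ℕ} (hagree : ∀ j < k, a j = b j)
    (ha : a k = false) (hb : b k = true) : cstd a + tw k ≤ cstd b := by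
  set d : ℕ → ℝ := fun m => (bitR (b m) - bitR (a m)) * tw m with hd
  have hsd : Summable d := by
    have := (summable_bit b).sub (summable_bit a)
    apply this.congr
    intro m; simp only [hd]; ring
  have hdiff : cstd b - cstd a = ∑' m, d m := by
    rw [cstd, cstd, ← Summable.tsum_sub (summable_bit b) (summable_bit a)]
    congr 1; funext m; simp only [hd]; ring
  have hhead : ∑ i ∈ Finset.range (k+1), d i = 2 * tw k := by
    rw [Finset.sum_eq_single k]
    · simp [hd, ha, hb, bitR]
    · intro j hj hjk
      have hjlt : j < k := by
        rcases Nat.lt_succ_iff_lt_or_eq.mp (Finset.mem_range.mp hj) with h | h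
        · exact h
        · exact absurd h hjk
      simp [hd, hagree j hjlt]
    · intro h; exact absurd (Finset.self_mem_range_succ k) h
  have htail : -(tw k) ≤ ∑' i : ℕ, d (i + (k+1)) := by
    have h1 : ∀ i : ℕ, -(2 * tw (i + (k + 1))) ≤ d (i + (k+1)) := by
      intro i
      have h2 : (-2 : ℝ) ≤ bitR (b (i + (k+1))) - bitR (a (i + (k+1))) := by
        have := bitR_nonneg (b (i + (k+1))); have := bitR_le (a (i + (k+1))); linarith
      have := mul_le_mul_of_nonneg_right h2 (tw_pos (i + (k+1))).le
      calc -(2 * tw (i + (k + 1))) = -2 * tw (i + (k+1)) := by ring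
        _ ≤ _ := this
    have hs1 : Summable (fun i : ℕ => -(2 * tw (i + (k + 1)))) :=
      (((summable_tw.mul_left 2).comp_injective (add_left_injective (k+1)))).neg
    have hs2 : Summable (fun i : ℕ => d (i + (k+1))) :=
      hsd.comp_injective (add_left_injective (k+1))
    have hle := Summable.tsum_le_tsum h1 hs1 hs2
    have heq : ∑' i : ℕ, -(2 * tw (i + (k + 1))) = -(tw k) := by
      rw [tsum_neg, tsum_mul_left, tsum_tw_tail]; ring
    linarith [heq ▸ hle]
  have hsplit := Summable.sum_add_tsum_nat_add (f := d) (k+1) hsd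
  have hfin : cstd b - cstd a ≥ 2 * tw k - tw k := by
    rw [hdiff, ← hsplit, hhead]; linarith
  linarith

def lexLt (a b : ℕ → Bool) : Prop := ∃ k, (∀ j < k, a j = b j) ∧ a k = false ∧ b k = true

lemma cstd_lt_of_lexLt {a b : ℕ → Bool} (h : lexLt a b) : cstd a < cstd b := by
  obtain ⟨k, h1, h2, h3⟩ := h
  have := cstd_gap h1 h2 h3
  have := tw_pos k
  linarith

lemma lexLt_trichotomy (a b : ℕ → Bool) (h : a ≠ b) : lexLt a b ∨ lexLt b a := by
  have hex : ∃ k, a k ≠ b k := by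
    by_contra hc
    push_neg at hc
    exact h (funext hc)
  classical
  have hk : a (Nat.find hex) ≠ b (Nat.find hex) := Nat.find_spec hex
  have hmin : ∀ j < Nat.find hex, a j = b j := fun j hj => by
    by_contra hcon
    exact absurd (Nat.find_le hcon) (not_le.mpr hj)
  cases hak : a (Nat.find hex) <;> cases hbk : b (Nat.find hex)
  · rw [hak, hbk] at hk; exact absurd rfl hk
  · exact Or.inl ⟨Nat.find hex, hmin, hak, hbk⟩
  · exact Or.inr ⟨Nat.find hex, fun j hj => (hmin j hj).symm, hbk, hak⟩
  · rw [hak, hbk] at hk; exact absurd rfl hk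

lemma cstd_injective : Function.Injective cstd := by
  intro a b hab
  by_contra h
  rcases lexLt_trichotomy a b h with hl | hl
  · exact absurd hab (ne_of_lt (cstd_lt_of_lexLt hl))
  · exact absurd hab.symm (ne_of_lt (cstd_lt_of_lexLt hl))

lemma continuous_cstd : Continuous cstd := by
  apply continuous_tsum (u := fun m => 2 * tw m)
  · intro m
    exact ((continuous_of_discreteTopology (α := Bool) (f := bitR)).comp
      (continuous_apply m)).mul continuous_const
  · exact summable_tw.mul_left 2
  · intro m a
    rw [Real.norm_eq_abs, abs_of_nonneg (mul_nonneg (bitR_nonneg _) (tw_pos m).le)]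
    exact mul_le_mul_of_nonneg_right (bitR_le _) (tw_pos m).le

/-! ### Sparse spread versions -/

def spread (n i : ℕ) (a : ℕ → Bool) : ℕ → Bool := fun m => if m % n = i then a (m / n) else false

def csp (n i : ℕ) (a : ℕ → Bool) : ℝ := cstd (spread n i a)

lemma spread_lexLt {n i : ℕ} (hi : i < n) {a b : ℕ → Bool} (h : lexLt a b) :
    lexLt (spread n i a) (spread n i b) := by
  obtain ⟨k, hagree, ha, hb⟩ := h
  have hn : 0 < n := lt_of_le_of_lt (Nat.zero_le i) hi
  refine ⟨n * k + i, ?_, ?_, ?_⟩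
  · intro j hj
    simp only [spread]
    split_ifs with hmod
    · have hj2 : j = n * (j / n) + i := by
        conv_lhs => rw [← Nat.div_add_mod j n]
        rw [hmod]
      have hdiv : j / n < k := by
        by_contra hc
        push_neg at hc
        have : n * k + i ≤ j := by
          calc n * k + i ≤ n * (j / n) + i := by
                have := Nat.mul_le_mul_left n hc; omega
            _ = j := hj2.symm
        omega
      rw [hagree _ hdiv]
    · rfl
  · simp only [spread, Nat.mul_add_mod, Nat.mod_eq_of_lt hi, if_pos rfl,
      Nat.mul_add_div hn, Nat.div_eq_of_lt hi, Nat.add_zero, ha]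
    simp
  · simp only [spread, Nat.mul_add_mod, Nat.mod_eq_of_lt hi, if_pos rfl,
      Nat.mul_add_div hn, Nat.div_eq_of_lt hi, Nat.add_zero, hb]
    simp

lemma csp_lt_of_lexLt {n i : ℕ} (hi : i < n) {a b : ℕ → Bool} (h : lexLt a b) :
    csp n i a < csp n i b :=
  cstd_lt_of_lexLt (spread_lexLt hi h)

lemma continuous_spread (n i : ℕ) : Continuous (spread n i) := by
  apply continuous_pi
  intro m
  simp only [spread]
  split_ifs with h
  · exact continuous_apply _
  · exact continuous_const

lemma continuous_csp (n i : ℕ) : Continuous (csp n i) :=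
  continuous_cstd.comp (continuous_spread n i)

def comb (n : ℕ) (hn : 0 < n) (a : Fin n → ℕ → Bool) : ℕ → Bool :=
  fun m => a ⟨m % n, Nat.mod_lt m hn⟩ (m / n)

lemma sum_csp (n : ℕ) (hn : 0 < n) (a : Fin n → ℕ → Bool) :
    ∑ i : Fin n, csp n i (a i) = cstd (comb n hn a) := by
  simp only [csp, cstd]
  rw [← Summable.tsum_finsetSum (fun i _ => summable_bit _)]
  congr 1
  funext m
  rw [← Finset.sum_mul]
  congr 1
  rw [Finset.sum_eq_single (⟨m % n, Nat.mod_lt m hn⟩ : Fin n)]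
  · simp [spread, comb]
  · intro j _ hj
    simp only [spread]
    rw [if_neg, bitR]
    · simp
    · intro hc
      apply hj
      exact Fin.ext hc.symm
  · intro h; exact absurd (Finset.mem_univ _) h

lemma comb_injective (n : ℕ) (hn : 0 < n) : Function.Injective (comb n hn) := by
  intro a b hab
  funext i k
  have := congrFun hab (n * k + i)
  simp only [comb] at this
  have h1 : (n * k + (i:ℕ)) % n = i := by
    rw [Nat.mul_add_mod, Nat.mod_eq_of_lt i.2]
  have h2 : (n * k + (i:ℕ)) / n = k := by
    rw [Nat.mul_add_div hn, Nat.div_eq_of_lt i.2, Nat.add_zero]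
  rw [show (⟨(n * k + (i:ℕ)) % n, Nat.mod_lt _ hn⟩ : Fin n) = i from Fin.ext h1, h2] at this
  exact this


/-! ### Interval splitting scheme -/

lemma exists_split (D : Set ℝ) (hDc : IsClosed D) (hDnw : interior D = ∅) {u v : ℝ} (h : u < v) :
    ∃ pq : ℝ × ℝ, u < pq.1 ∧ pq.1 < pq.2 ∧ pq.2 < v ∧ (Ioo pq.1 pq.2) ∩ D = ∅ ∧
      pq.1 - u ≤ 2/3 * (v - u) ∧ v - pq.2 ≤ 2/3 * (v - u) := by
  obtain ⟨w, hw, hwD⟩ : ∃ w ∈ Ioo (u + (v-u)/3) (u + (v-u)*(2/3)), w ∉ D := by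
    by_contra hc
    push_neg at hc
    have hsub : Ioo (u + (v-u)/3) (u + (v-u)*(2/3)) ⊆ interior D :=
      interior_maximal hc isOpen_Ioo
    rw [hDnw] at hsub
    have : (u + (v-u)/2) ∈ Ioo (u + (v-u)/3) (u + (v-u)*(2/3)) :=
      mem_Ioo.mpr ⟨by linarith, by linarith⟩
    exact (hsub this).elim
  obtain ⟨hw1, hw2⟩ := mem_Ioo.mp hw
  obtain ⟨ε, hε, hball⟩ : ∃ ε > 0, Metric.ball w ε ⊆ Dᶜ := by
    rcases Metric.isOpen_iff.mp hDc.isOpen_compl w hwD with ⟨ε, hε, hb⟩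
    exact ⟨ε, hε, hb⟩
  obtain ⟨ε', hε'pos, hε'1, hε'2, hε'3⟩ :
      ∃ ε' : ℝ, 0 < ε' ∧ ε' ≤ ε/2 ∧ ε' ≤ (w - (u + (v-u)/3))/2 ∧ ε' ≤ ((u + (v-u)*(2/3)) - w)/2 := by
    refine ⟨min (ε/2) (min ((w - (u + (v-u)/3))/2) (((u + (v-u)*(2/3)) - w)/2)), ?_, ?_, ?_, ?_⟩
    · exact lt_min (by linarith) (lt_min (by linarith) (by linarith))
    · exact min_le_left _ _
    · exact le_trans (min_le_right _ _) (min_le_left _ _)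
    · exact le_trans (min_le_right _ _) (min_le_right _ _)
  refine ⟨(w - ε', w + ε'), by simp only; linarith, by simp only; linarith,
    by simp only; linarith, ?_, by simp only; linarith, by simp only; linarith⟩
  rw [eq_empty_iff_forall_notMem]
  rintro x ⟨hx1, hx2⟩
  obtain ⟨hx11, hx12⟩ := mem_Ioo.mp hx1
  have : x ∈ Metric.ball w ε := by
    rw [Metric.mem_ball, Real.dist_eq, abs_lt]
    constructor <;> simp only at hx11 hx12 <;> [linarith; linarith]
  exact (hball this) hx2

open scoped Classical in
/-- One splitting step. -/
noncomputable def nxt (D : Set ℝ) (I : ℝ × ℝ) (b : Bool) : ℝ × ℝ :=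
  if h : IsClosed D ∧ interior D = ∅ ∧ I.1 < I.2 then
    if b then ((exists_split D h.1 h.2.1 h.2.2).choose.2, I.2)
    else (I.1, (exists_split D h.1 h.2.1 h.2.2).choose.1)
  else I

section Scheme

variable {D : Set ℝ}

lemma nxt_spec (hDnw : interior D = ∅) (hD : IsCompact D) {I : ℝ × ℝ} (h : I.1 < I.2) :
    (nxt D I false).1 = I.1 ∧ (nxt D I true).2 = I.2 ∧
    I.1 < (nxt D I false).2 ∧ (nxt D I false).2 < (nxt D I true).1 ∧ (nxt D I true).1 < I.2 ∧
    Ioo (nxt D I false).2 (nxt D I true).1 ∩ D = ∅ ∧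
    (nxt D I false).2 - I.1 ≤ 2/3 * (I.2 - I.1) ∧ I.2 - (nxt D I true).1 ≤ 2/3 * (I.2 - I.1) := by
  have hDc := hD.isClosed
  have hcond : IsClosed D ∧ interior D = ∅ ∧ I.1 < I.2 := ⟨hDc, hDnw, h⟩
  obtain ⟨h1, h2, h3, h4, h5, h6⟩ := (exists_split D hDc hDnw h).choose_spec
  have hf : nxt D I false = (I.1, (exists_split D hDc hDnw h).choose.1) := by
    simp [nxt, dif_pos hcond]
  have ht : nxt D I true = ((exists_split D hDc hDnw h).choose.2, I.2) := by
    simp [nxt, dif_pos hcond]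
  rw [hf, ht]
  exact ⟨rfl, rfl, h1, h2, h3, h4, h5, h6⟩

/-- The nested interval scheme. -/
noncomputable def P (D : Set ℝ) (a : ℕ → Bool) : ℕ → ℝ × ℝ
  | 0 => (sInf D - 1, sSup D + 1)
  | (k+1) => nxt D (P D a k) (a k)

lemma root_lt (hD : IsCompact D) {a : ℕ → Bool} : (P D a 0).1 < (P D a 0).2 := by
  show sInf D - 1 < sSup D + 1
  rcases eq_empty_or_nonempty D with h | h
  · simp [h, Real.sInf_empty, Real.sSup_empty]
  · have := Real.sInf_le_sSup D hD.bddBelow hD.bddAbove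
    linarith

lemma subset_rootIcc (hD : IsCompact D) (a : ℕ → Bool) : D ⊆ Icc (P D a 0).1 (P D a 0).2 := by
  intro x hx
  have h1 := csInf_le hD.bddBelow hx
  have h2 := le_csSup hD.bddAbove hx
  exact ⟨by show sInf D - 1 ≤ x; linarith, by show x ≤ sSup D + 1; linarith⟩

lemma P_lt (hDnw : interior D = ∅) (hD : IsCompact D) (a : ℕ → Bool) :
    ∀ k, (P D a k).1 < (P D a k).2 := by
  intro k
  induction k with
  | zero => exact root_lt hD
  | succ k ih =>
    obtain ⟨e1, e2, e3, e4, e5, _, _, _⟩ := nxt_spec hDnw hD ih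
    show (nxt D (P D a k) (a k)).1 < (nxt D (P D a k) (a k)).2
    cases hak : a k
    · rw [e1]; exact e3
    · rw [e2]; calc (nxt D (P D a k) true).1 < (P D a k).2 := e5
        _ = _ := rfl

lemma P_nested (hDnw : interior D = ∅) (hD : IsCompact D) (a : ℕ → Bool) (k : ℕ) :
    (P D a k).1 ≤ (P D a (k+1)).1 ∧ (P D a (k+1)).2 ≤ (P D a k).2 := by
  obtain ⟨e1, e2, e3, e4, e5, _, _, _⟩ := nxt_spec hDnw hD (P_lt hDnw hD a k)
  show (P D a k).1 ≤ (nxt D (P D a k) (a k)).1 ∧ (nxt D (P D a k) (a k)).2 ≤ (P D a k).2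
  cases hak : a k
  · exact ⟨le_of_eq e1.symm, by linarith⟩
  · exact ⟨by linarith, le_of_eq e2⟩

lemma P_left_mono (hDnw : interior D = ∅) (hD : IsCompact D) (a : ℕ → Bool) :
    Monotone (fun k => (P D a k).1) :=
  monotone_nat_of_le_succ (fun k => (P_nested hDnw hD a k).1)

lemma P_right_anti (hDnw : interior D = ∅) (hD : IsCompact D) (a : ℕ → Bool) :
    Antitone (fun k => (P D a k).2) :=
  antitone_nat_of_succ_le (fun k => (P_nested hDnw hD a k).2)

lemma P_width (hDnw : interior D = ∅) (hD : IsCompact D) (a : ℕ → Bool) :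
    ∀ k, (P D a k).2 - (P D a k).1 ≤ (2/3)^k * ((P D a 0).2 - (P D a 0).1) := by
  intro k
  induction k with
  | zero => simp
  | succ k ih =>
    obtain ⟨e1, e2, e3, e4, e5, _, e7, e8⟩ := nxt_spec hDnw hD (P_lt hDnw hD a k)
    have hstep : (P D a (k+1)).2 - (P D a (k+1)).1 ≤ 2/3 * ((P D a k).2 - (P D a k).1) := by
      show (nxt D (P D a k) (a k)).2 - (nxt D (P D a k) (a k)).1 ≤ _
      cases a k
      · rw [e1]; exact e7
      · rw [e2]; exact e8
    calc (P D a (k+1)).2 - (P D a (k+1)).1 ≤ 2/3 * ((P D a k).2 - (P D a k).1) := hstep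
      _ ≤ 2/3 * ((2/3)^k * ((P D a 0).2 - (P D a 0).1)) := by linarith
      _ = (2/3)^(k+1) * ((P D a 0).2 - (P D a 0).1) := by ring

lemma P_congr {a b : ℕ → Bool} : ∀ {k}, (∀ j < k, a j = b j) → P D a k = P D b k := by
  intro k
  induction k with
  | zero => intro _; rfl
  | succ k ih =>
    intro h
    show nxt D (P D a k) (a k) = nxt D (P D b k) (b k)
    rw [ih (fun j hj => h j (Nat.lt_succ_of_lt hj)), h k (Nat.lt_succ_self k)]

lemma P_sep (hDnw : interior D = ∅) (hD : IsCompact D) {a b : ℕ → Bool} {k : ℕ}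
    (hagree : ∀ j < k, a j = b j) (ha : a k = false) (hb : b k = true) :
    (P D a (k+1)).2 < (P D b (k+1)).1 := by
  have hPk : P D a k = P D b k := P_congr hagree
  obtain ⟨e1, e2, e3, e4, e5, _, _, _⟩ := nxt_spec hDnw hD (P_lt hDnw hD b k)
  show (nxt D (P D a k) (a k)).2 < (nxt D (P D b k) (b k)).1
  rw [hPk, ha, hb]
  exact e4

/-- The embedding of the Cantor cube associated to `D`. -/
noncomputable def eD (D : Set ℝ) (a : ℕ → Bool) : ℝ := ⨆ k, (P D a k).1

lemma P_le_root (hDnw : interior D = ∅) (hD : IsCompact D) (a : ℕ → Bool) :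
    ∀ k, (P D a k).1 ≤ (P D a 0).2 := by
  intro k
  calc (P D a k).1 ≤ (P D a k).2 := (P_lt hDnw hD a k).le
    _ ≤ (P D a 0).2 := P_right_anti hDnw hD a (Nat.zero_le k)

lemma eD_bddAbove (hDnw : interior D = ∅) (hD : IsCompact D) (a : ℕ → Bool) :
    BddAbove (range (fun k => (P D a k).1)) :=
  ⟨(P D a 0).2, by rintro x ⟨k, rfl⟩; exact P_le_root hDnw hD a k⟩

lemma eD_mem (hDnw : interior D = ∅) (hD : IsCompact D) (a : ℕ → Bool) (k : ℕ) :
    eD D a ∈ Icc (P D a k).1 (P D a k).2 := by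
  constructor
  · exact le_ciSup (eD_bddAbove hDnw hD a) k
  · apply ciSup_le
    intro j
    rcases le_total j k with h | h
    · calc (P D a j).1 ≤ (P D a k).1 := P_left_mono hDnw hD a h
        _ ≤ (P D a k).2 := (P_lt hDnw hD a k).le
    · calc (P D a j).1 ≤ (P D a j).2 := (P_lt hDnw hD a j).le
        _ ≤ (P D a k).2 := P_right_anti hDnw hD a h

lemma eD_lt_of_lexLt (hDnw : interior D = ∅) (hD : IsCompact D) {a b : ℕ → Bool}
    (h : lexLt a b) : eD D a < eD D b := by
  obtain ⟨k, hagree, ha, hb⟩ := h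
  calc eD D a ≤ (P D a (k+1)).2 := (eD_mem hDnw hD a (k+1)).2
    _ < (P D b (k+1)).1 := P_sep hDnw hD hagree ha hb
    _ ≤ eD D b := (eD_mem hDnw hD b (k+1)).1

lemma eD_injective (hDnw : interior D = ∅) (hD : IsCompact D) :
    Function.Injective (eD D) := by
  intro a b hab
  by_contra h
  rcases lexLt_trichotomy a b h with hl | hl
  · exact absurd hab (ne_of_lt (eD_lt_of_lexLt hDnw hD hl))
  · exact absurd hab.symm (ne_of_lt (eD_lt_of_lexLt hDnw hD hl))

lemma lexLt_of_eD_lt (hDnw : interior D = ∅) (hD : IsCompact D) {a b : ℕ → Bool}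
    (h : eD D a < eD D b) : lexLt a b := by
  have hne : a ≠ b := by rintro rfl; exact lt_irrefl _ h
  rcases lexLt_trichotomy a b hne with hl | hl
  · exact hl
  · exact absurd (eD_lt_of_lexLt hDnw hD hl) (not_lt.mpr h.le)

lemma eD_close (hDnw : interior D = ∅) (hD : IsCompact D) {a b : ℕ → Bool} {k : ℕ}
    (h : ∀ j < k, a j = b j) :
    |eD D a - eD D b| ≤ (2/3)^k * ((P D a 0).2 - (P D a 0).1) := by
  have hPk : P D a k = P D b k := P_congr h
  have h1 := eD_mem hDnw hD a k
  have h2 := eD_mem hDnw hD b k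
  rw [← hPk] at h2
  have hw := P_width hDnw hD a k
  rw [abs_le]
  constructor <;>
    · obtain ⟨l1, r1⟩ := h1
      obtain ⟨l2, r2⟩ := h2
      linarith

lemma eD_continuous (hDnw : interior D = ∅) (hD : IsCompact D) : Continuous (eD D) := by
  rw [continuous_iff_continuousAt]
  intro a
  rw [ContinuousAt, Metric.tendsto_nhds]
  intro ε hε
  have hCpos : 0 < (P D a 0).2 - (P D a 0).1 := by
    have := root_lt hD (a := a); linarith
  obtain ⟨k, hk⟩ : ∃ k : ℕ, ((2:ℝ)/3)^k < ε / ((P D a 0).2 - (P D a 0).1) :=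
    exists_pow_lt_of_lt_one (div_pos hε hCpos) (by norm_num)
  have hkC : (2/3:ℝ)^k * ((P D a 0).2 - (P D a 0).1) < ε := by
    rw [← lt_div_iff₀ hCpos]; exact hk
  have hopen : IsOpen {b : ℕ → Bool | ∀ j < k, b j = a j} := by
    have heq : {b : ℕ → Bool | ∀ j < k, b j = a j} =
        ⋂ j ∈ Finset.range k, (fun b : ℕ → Bool => b j) ⁻¹' {a j} := by
      ext b; simp [Finset.mem_range]
    rw [heq]
    exact isOpen_biInter_finset (fun j _ => (continuous_apply j).isOpen_preimage _ (isOpen_discrete _))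
  have hmem : a ∈ {b : ℕ → Bool | ∀ j < k, b j = a j} := fun j _ => rfl
  filter_upwards [hopen.mem_nhds hmem] with b hb
  have hcl := eD_close hDnw hD (a := b) (b := a) (k := k) hb
  have hroot : P D b 0 = P D a 0 := rfl
  rw [Real.dist_eq]
  calc |eD D b - eD D a| ≤ (2/3)^k * ((P D b 0).2 - (P D b 0).1) := hcl
    _ = (2/3)^k * ((P D a 0).2 - (P D a 0).1) := by rw [hroot]
    _ < ε := hkC

lemma subset_range_eD (hDnw : interior D = ∅) (hD : IsCompact D) : D ⊆ range (eD D) := by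
  intro x hx
  let g : ℕ → ℝ × ℝ := fun k => Nat.rec (P D (fun _ => false) 0)
    (fun _ I => nxt D I (decide ((nxt D I false).2 < x))) k
  let σ : ℕ → Bool := fun k => decide ((nxt D (g k) false).2 < x)
  have hgs : ∀ k, g (k+1) = nxt D (g k) (σ k) := fun k => rfl
  have hPg : ∀ k, P D σ k = g k := by
    intro k
    induction k with
    | zero => rfl
    | succ k ih => rw [show P D σ (k+1) = nxt D (P D σ k) (σ k) from rfl, ih, ← hgs]
  have hxg : ∀ k, x ∈ Icc (g k).1 (g k).2 := by
    intro k
    induction k with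
    | zero => exact subset_rootIcc hD σ hx
    | succ k ih =>
      have hlt : (g k).1 < (g k).2 := by rw [← hPg k]; exact P_lt hDnw hD σ k
      obtain ⟨e1, e2, e3, e4, e5, e6, _, _⟩ := nxt_spec hDnw hD hlt
      rw [hgs k]
      by_cases hle : (nxt D (g k) false).2 < x
      · have hσ : σ k = true := by simp [σ, hle]
        rw [hσ]
        have hxq : (nxt D (g k) true).1 ≤ x := by
          by_contra hc
          push_neg at hc
          have : x ∈ Ioo (nxt D (g k) false).2 (nxt D (g k) true).1 ∩ D :=
            ⟨mem_Ioo.mpr ⟨hle, hc⟩, hx⟩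
          rw [e6] at this
          exact this
        exact ⟨hxq, by rw [e2]; exact ih.2⟩
      · have hσ : σ k = false := by simp [σ, hle]
        rw [hσ]
        push_neg at hle
        exact ⟨by rw [e1]; exact ih.1, hle⟩
  refine ⟨σ, ?_⟩
  have hbound : ∀ k, |eD D σ - x| ≤ (2/3)^k * ((P D σ 0).2 - (P D σ 0).1) := by
    intro k
    have h1 := eD_mem hDnw hD σ k
    have h2 := hxg k
    rw [← hPg k] at h2
    have hw := P_width hDnw hD σ k
    rw [abs_le]
    obtain ⟨l1, r1⟩ := h1
    obtain ⟨l2, r2⟩ := h2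
    constructor <;> linarith
  have htend : Filter.Tendsto (fun k : ℕ => (2/3:ℝ)^k * ((P D σ 0).2 - (P D σ 0).1))
      Filter.atTop (nhds 0) := by
    have := tendsto_pow_atTop_nhds_zero_of_lt_one (by norm_num : (0:ℝ) ≤ 2/3) (by norm_num)
    simpa using this.mul_const _
  have : |eD D σ - x| ≤ 0 := ge_of_tendsto' htend hbound
  have := abs_nonneg (eD D σ - x)
  have heq : |eD D σ - x| = 0 := le_antisymm ‹|eD D σ - x| ≤ 0› this
  have := abs_eq_zero.mp heq
  linarith [sub_eq_zero.mp this]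

end Scheme



/-! ### Extension of strictly monotone continuous maps on compact sets to order isos of ℝ -/

section Ext

variable {E : Set ℝ} {ψ : ℝ → ℝ}

open scoped Classical in
/-- The extension formula. -/
noncomputable def extFun (E : Set ℝ) (ψ : ℝ → ℝ) (x : ℝ) : ℝ :=
  if x < sInf E then ψ (sInf E) + (x - sInf E)
  else if sSup E < x then ψ (sSup E) + (x - sSup E)
  else if x ∈ E then ψ x
  else
    (ψ (sSup (E ∩ Iic x)) + (x - sSup (E ∩ Iic x)) *
      (ψ (sInf (E ∩ Ici x)) - ψ (sSup (E ∩ Iic x))) / (sInf (E ∩ Ici x) - sSup (E ∩ Iic x)))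

theorem exists_orderIso_ext (hE : IsCompact E) (hne : E.Nonempty)
    (hmono : StrictMonoOn ψ E) (hcont : ContinuousOn ψ E) :
    ∃ Φ : ℝ ≃o ℝ, Set.EqOn (⇑Φ) ψ E := by
  classical
  set m := sInf E with hm
  set M := sSup E with hM
  have hmE : m ∈ E := hE.sInf_mem hne
  have hME : M ∈ E := hE.sSup_mem hne
  have hmle : ∀ t ∈ E, m ≤ t := fun t ht => csInf_le hE.bddBelow ht
  have hleM : ∀ t ∈ E, t ≤ M := fun t ht => le_csSup hE.bddAbove ht
  have hmM : m ≤ M := hmle M hME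
  -- gap facts
  have gapF : ∀ x, m ≤ x → x ≤ M → x ∉ E →
      sSup (E ∩ Iic x) ∈ E ∧ sSup (E ∩ Iic x) < x ∧
      sInf (E ∩ Ici x) ∈ E ∧ x < sInf (E ∩ Ici x) ∧
      (∀ t ∈ E, t ≤ sSup (E ∩ Iic x) ∨ sInf (E ∩ Ici x) ≤ t) := by
    intro x hmx hxM hxE
    have hc1 : IsCompact (E ∩ Iic x) := hE.inter_right isClosed_Iic
    have hn1 : (E ∩ Iic x).Nonempty := ⟨m, hmE, hmx⟩
    have hc2 : IsCompact (E ∩ Ici x) := hE.inter_right isClosed_Ici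
    have hn2 : (E ∩ Ici x).Nonempty := ⟨M, hME, hxM⟩
    have hl := hc1.sSup_mem hn1
    have hr := hc2.sInf_mem hn2
    have hlx : sSup (E ∩ Iic x) ≤ x := (csSup_le hn1 (fun t ht => ht.2))
    have hxr : x ≤ sInf (E ∩ Ici x) := (le_csInf hn2 (fun t ht => ht.2))
    refine ⟨hl.1, lt_of_le_of_ne hlx (fun hc => hxE (hc ▸ hl.1)), hr.1,
      lt_of_le_of_ne hxr (fun hc => hxE (hc ▸ hr.1)), ?_⟩
    intro t ht
    rcases le_total t x with h | h
    · exact Or.inl (le_csSup hc1.bddAbove ⟨ht, h⟩)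
    · exact Or.inr (csInf_le hc2.bddBelow ⟨ht, h⟩)
  -- basic formula facts
  have hval : ∀ x ∈ E, extFun E ψ x = ψ x := by
    intro x hx
    rw [extFun, if_neg (not_lt.mpr (hmle x hx)), if_neg (not_lt.mpr (hleM x hx)), if_pos hx]
  have hgapval : ∀ x, m ≤ x → x ≤ M → x ∉ E →
      extFun E ψ x = ψ (sSup (E ∩ Iic x)) + (x - sSup (E ∩ Iic x)) *
        (ψ (sInf (E ∩ Ici x)) - ψ (sSup (E ∩ Iic x))) / (sInf (E ∩ Ici x) - sSup (E ∩ Iic x)) := by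
    intro x h1 h2 h3
    rw [extFun, if_neg (not_lt.mpr h1), if_neg (not_lt.mpr h2), if_neg h3]
  -- strict bounds on gaps
  have hgapbd : ∀ x, m ≤ x → x ≤ M → x ∉ E →
      ψ (sSup (E ∩ Iic x)) < extFun E ψ x ∧ extFun E ψ x < ψ (sInf (E ∩ Ici x)) := by
    intro x h1 h2 h3
    obtain ⟨hlE, hlx, hrE, hxr, _⟩ := gapF x h1 h2 h3
    have hlr : sSup (E ∩ Iic x) < sInf (E ∩ Ici x) := lt_trans hlx hxr
    have hψ : ψ (sSup (E ∩ Iic x)) < ψ (sInf (E ∩ Ici x)) := hmono hlE hrE hlr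
    rw [hgapval x h1 h2 h3]
    constructor
    · have : 0 < (x - sSup (E ∩ Iic x)) * (ψ (sInf (E ∩ Ici x)) - ψ (sSup (E ∩ Iic x))) /
          (sInf (E ∩ Ici x) - sSup (E ∩ Iic x)) := by
        apply div_pos (mul_pos (by linarith) (by linarith)) (by linarith)
      linarith
    · rw [add_comm, ← lt_sub_iff_add_lt, div_lt_iff₀ (by linarith : (0:ℝ) < sInf (E ∩ Ici x) - sSup (E ∩ Iic x))]
      have hxlt : x - sSup (E ∩ Iic x) < sInf (E ∩ Ici x) - sSup (E ∩ Iic x) := by linarith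
      calc (x - sSup (E ∩ Iic x)) * (ψ (sInf (E ∩ Ici x)) - ψ (sSup (E ∩ Iic x)))
          < (sInf (E ∩ Ici x) - sSup (E ∩ Iic x)) * (ψ (sInf (E ∩ Ici x)) - ψ (sSup (E ∩ Iic x))) := by
            apply mul_lt_mul_of_pos_right hxlt (by linarith)
        _ = (ψ (sInf (E ∩ Ici x)) - ψ (sSup (E ∩ Iic x))) * (sInf (E ∩ Ici x) - sSup (E ∩ Iic x)) := by ring
  -- global bounds on the middle region
  have hmid : ∀ x, m ≤ x → x ≤ M → ψ m ≤ extFun E ψ x ∧ extFun E ψ x ≤ ψ M := by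
    intro x h1 h2
    by_cases hx : x ∈ E
    · rw [hval x hx]
      exact ⟨hmono.monotoneOn hmE hx (hmle x hx), hmono.monotoneOn hx hME (hleM x hx)⟩
    · obtain ⟨hlE, hlx, hrE, hxr, _⟩ := gapF x h1 h2 hx
      obtain ⟨hb1, hb2⟩ := hgapbd x h1 h2 hx
      constructor
      · calc ψ m ≤ ψ (sSup (E ∩ Iic x)) := hmono.monotoneOn hmE hlE (hmle _ hlE)
          _ ≤ extFun E ψ x := hb1.le
      · calc extFun E ψ x ≤ ψ (sInf (E ∩ Ici x)) := hb2.le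
          _ ≤ ψ M := hmono.monotoneOn hrE hME (hleM _ hrE)
  -- strict monotonicity
  have hsm : StrictMono (extFun E ψ) := by
    intro x y hxy
    rcases lt_or_ge x m with hx1 | hx1
    · -- x in left ray
      have hfx : extFun E ψ x = ψ m + (x - m) := by rw [extFun, if_pos hx1]
      rcases lt_or_ge y m with hy1 | hy1
      · have hfy : extFun E ψ y = ψ m + (y - m) := by rw [extFun, if_pos hy1]
        rw [hfx, hfy]; linarith
      · rcases le_or_gt y M with hy2 | hy2
        · have := (hmid y hy1 hy2).1
          rw [hfx]; linarith
        · have hfy : extFun E ψ y = ψ M + (y - M) := by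
            rw [extFun, if_neg (not_lt.mpr hy1), if_pos hy2]
          rw [hfx, hfy]
          have : ψ m ≤ ψ M := hmono.monotoneOn hmE hME hmM
          linarith
    · rcases le_or_gt x M with hx2 | hx2
      · -- x in middle
        rcases le_or_gt y M with hy2 | hy2
        · -- both middle
          have hy1 : m ≤ y := le_trans hx1 hxy.le
          by_cases hxE : x ∈ E <;> by_cases hyE : y ∈ E
          · rw [hval x hxE, hval y hyE]; exact hmono hxE hyE hxy
          · obtain ⟨hlE, hlx, hrE, hxr, _⟩ := gapF y hy1 hy2 hyE
            have hxl : x ≤ sSup (E ∩ Iic y) := le_csSup (hE.inter_right isClosed_Iic).bddAbove ⟨hxE, hxy.le⟩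
            have := (hgapbd y hy1 hy2 hyE).1
            rw [hval x hxE]
            calc ψ x ≤ ψ (sSup (E ∩ Iic y)) := hmono.monotoneOn hxE hlE hxl
              _ < extFun E ψ y := this
          · obtain ⟨hlE, hlx, hrE, hxr, _⟩ := gapF x hx1 hx2 hxE
            have hry : sInf (E ∩ Ici x) ≤ y := csInf_le (hE.inter_right isClosed_Ici).bddBelow ⟨hyE, hxy.le⟩
            have := (hgapbd x hx1 hx2 hxE).2
            rw [hval y hyE]
            calc extFun E ψ x < ψ (sInf (E ∩ Ici x)) := this
              _ ≤ ψ y := hmono.monotoneOn hrE hyE hry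
          · -- both in gaps
            obtain ⟨hlEx, hlxx, hrEx, hxrx, hdix⟩ := gapF x hx1 hx2 hxE
            obtain ⟨hlEy, hlxy, hrEy, hxry, hdiy⟩ := gapF y hy1 hy2 hyE
            rcases le_or_gt (sInf (E ∩ Ici x)) y with hcase | hcase
            · -- different gaps
              have h1 := (hgapbd x hx1 hx2 hxE).2
              have h2 := (hgapbd y hy1 hy2 hyE).1
              have hrl : sInf (E ∩ Ici x) ≤ sSup (E ∩ Iic y) :=
                le_csSup (hE.inter_right isClosed_Iic).bddAbove ⟨hrEx, hcase⟩
              calc extFun E ψ x < ψ (sInf (E ∩ Ici x)) := h1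
                _ ≤ ψ (sSup (E ∩ Iic y)) := hmono.monotoneOn hrEx hlEy hrl
                _ < extFun E ψ y := h2
            · -- same gap
              have hsame1 : E ∩ Iic y = E ∩ Iic x := by
                apply Subset.antisymm
                · rintro t ⟨ht, hty⟩
                  rcases hdix t ht with h | h
                  · exact ⟨ht, le_trans h hlxx.le⟩
                  · exact absurd (le_trans h (mem_Iic.mp hty)) (not_le.mpr hcase)
                · rintro t ⟨ht, htx⟩
                  exact ⟨ht, le_trans htx hxy.le⟩
              have hsame2 : E ∩ Ici y = E ∩ Ici x := by
                apply Subset.antisymm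
                · rintro t ⟨ht, hty⟩
                  exact ⟨ht, le_trans hxy.le hty⟩
                · rintro t ⟨ht, htx⟩
                  rcases hdix t ht with h | h
                  · have : t < x := lt_of_le_of_lt h hlxx
                    exact absurd (mem_Ici.mp htx) (not_le.mpr this)
                  · exact ⟨ht, le_trans hcase.le h⟩
              rw [hgapval x hx1 hx2 hxE, hgapval y hy1 hy2 hyE, hsame1, hsame2]
              have hlr : sSup (E ∩ Iic x) < sInf (E ∩ Ici x) := lt_trans hlxx hxrx
              have hψlt : ψ (sSup (E ∩ Iic x)) < ψ (sInf (E ∩ Ici x)) := hmono hlEx hrEx hlr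
              have hpos : 0 < (ψ (sInf (E ∩ Ici x)) - ψ (sSup (E ∩ Iic x))) / (sInf (E ∩ Ici x) - sSup (E ∩ Iic x)) :=
                div_pos (by linarith) (by linarith)
              have hxy' : x - sSup (E ∩ Iic x) < y - sSup (E ∩ Iic x) := by linarith
              have := mul_lt_mul_of_pos_right hxy' hpos
              calc ψ (sSup (E ∩ Iic x)) + (x - sSup (E ∩ Iic x)) * (ψ (sInf (E ∩ Ici x)) - ψ (sSup (E ∩ Iic x))) / (sInf (E ∩ Ici x) - sSup (E ∩ Iic x))
                  = ψ (sSup (E ∩ Iic x)) + (x - sSup (E ∩ Iic x)) * ((ψ (sInf (E ∩ Ici x)) - ψ (sSup (E ∩ Iic x))) / (sInf (E ∩ Ici x) - sSup (E ∩ Iic x))) := by ring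
                _ < ψ (sSup (E ∩ Iic x)) + (y - sSup (E ∩ Iic x)) * ((ψ (sInf (E ∩ Ici x)) - ψ (sSup (E ∩ Iic x))) / (sInf (E ∩ Ici x) - sSup (E ∩ Iic x))) := by linarith
                _ = ψ (sSup (E ∩ Iic x)) + (y - sSup (E ∩ Iic x)) * (ψ (sInf (E ∩ Ici x)) - ψ (sSup (E ∩ Iic x))) / (sInf (E ∩ Ici x) - sSup (E ∩ Iic x)) := by ring
        · -- y in right ray
          have hfy : extFun E ψ y = ψ M + (y - M) := by
            rw [extFun, if_neg (not_lt.mpr (le_trans hx1 hxy.le)), if_pos hy2]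
          have := (hmid x hx1 hx2).2
          rw [hfy]; linarith
      · -- both right ray
        have hy2 : M < y := lt_trans hx2 hxy
        have hfx : extFun E ψ x = ψ M + (x - M) := by
          rw [extFun, if_neg (not_lt.mpr (le_trans hmM hx2.le)), if_pos hx2]
        have hfy : extFun E ψ y = ψ M + (y - M) := by
          rw [extFun, if_neg (not_lt.mpr (le_trans hmM hy2.le)), if_pos hy2]
        rw [hfx, hfy]; linarith
  -- surjectivity
  have hsurj : Function.Surjective (extFun E ψ) := by
    intro y
    rcases lt_or_ge y (ψ m) with hy1 | hy1
    · refine ⟨m + (y - ψ m), ?_⟩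
      have hx1 : m + (y - ψ m) < m := by linarith
      rw [extFun, if_pos hx1]; ring
    · rcases lt_or_ge (ψ M) y with hy2 | hy2
      · refine ⟨M + (y - ψ M), ?_⟩
        have hx2 : M < M + (y - ψ M) := by linarith
        have hx1 : ¬ (M + (y - ψ M) < m) := not_lt.mpr (by linarith)
        rw [extFun, if_neg hx1, if_pos hx2]; ring
      · -- middle values
        have hS1c : IsCompact {t | t ∈ E ∧ ψ t ≤ y} := by
          have hcl : IsClosed (E ∩ ψ ⁻¹' (Iic y)) :=
            hcont.preimage_isClosed_of_isClosed hE.isClosed (isClosed_Iic)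
          exact hE.of_isClosed_subset hcl (fun t ht => ht.1)
        have hS2c : IsCompact {t | t ∈ E ∧ y ≤ ψ t} := by
          have hcl : IsClosed (E ∩ ψ ⁻¹' (Ici y)) :=
            hcont.preimage_isClosed_of_isClosed hE.isClosed (isClosed_Ici)
          exact hE.of_isClosed_subset hcl (fun t ht => ht.1)
        have hS1n : {t | t ∈ E ∧ ψ t ≤ y}.Nonempty := ⟨m, hmE, hy1⟩
        have hS2n : {t | t ∈ E ∧ y ≤ ψ t}.Nonempty := ⟨M, hME, hy2⟩
        set l0 := sSup {t | t ∈ E ∧ ψ t ≤ y} with hl0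
        set r0 := sInf {t | t ∈ E ∧ y ≤ ψ t} with hr0
        have hl0m := hS1c.sSup_mem hS1n
        have hr0m := hS2c.sInf_mem hS2n
        obtain ⟨hl0E, hψl0⟩ := hl0m
        obtain ⟨hr0E, hψr0⟩ := hr0m
        by_cases hcase1 : ψ l0 = y
        · exact ⟨l0, by rw [hval l0 hl0E]; exact hcase1⟩
        by_cases hcase2 : ψ r0 = y
        · exact ⟨r0, by rw [hval r0 hr0E]; exact hcase2⟩
        have hψl0' : ψ l0 < y := lt_of_le_of_ne hψl0 hcase1
        have hψr0' : y < ψ r0 := lt_of_le_of_ne hψr0 (fun h => hcase2 h.symm)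
        have hl0r0 : l0 < r0 := by
          by_contra hc
          push_neg at hc
          have : ψ r0 ≤ ψ l0 := hmono.monotoneOn hr0E hl0E hc
          linarith
        have hdich : ∀ t ∈ E, t ≤ l0 ∨ r0 ≤ t := by
          intro t ht
          rcases le_total (ψ t) y with h | h
          · exact Or.inl (le_csSup hS1c.bddAbove ⟨ht, h⟩)
          · exact Or.inr (csInf_le hS2c.bddBelow ⟨ht, h⟩)
        set x := l0 + (y - ψ l0) * (r0 - l0) / (ψ r0 - ψ l0) with hx
        have hψd : 0 < ψ r0 - ψ l0 := by linarith
        have hfrac0 : 0 < (y - ψ l0) * (r0 - l0) / (ψ r0 - ψ l0) :=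
          div_pos (mul_pos (by linarith) (by linarith)) hψd
        have hfrac1 : (y - ψ l0) * (r0 - l0) / (ψ r0 - ψ l0) < r0 - l0 := by
          rw [div_lt_iff₀ hψd]
          have h1 : y - ψ l0 < ψ r0 - ψ l0 := by linarith
          calc (y - ψ l0) * (r0 - l0) < (ψ r0 - ψ l0) * (r0 - l0) :=
                mul_lt_mul_of_pos_right h1 (by linarith)
            _ = (r0 - l0) * (ψ r0 - ψ l0) := by ring
        have hl0x : l0 < x := by rw [hx]; linarith
        have hxr0 : x < r0 := by rw [hx]; linarith
        have hxE : x ∉ E := by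
          intro hc
          rcases hdich x hc with h | h
          · exact absurd h (not_le.mpr hl0x)
          · exact absurd h (not_le.mpr hxr0)
        have hmx : m ≤ x := le_trans (hmle l0 hl0E) hl0x.le
        have hxM : x ≤ M := le_trans hxr0.le (hleM r0 hr0E)
        have hsupeq : sSup (E ∩ Iic x) = l0 := by
          apply le_antisymm
          · apply csSup_le (⟨l0, hl0E, hl0x.le⟩ : (E ∩ Iic x).Nonempty)
            rintro t ⟨ht, htx⟩
            rcases hdich t ht with h | h
            · exact h
            · exact absurd (le_trans h (mem_Iic.mp htx)) (not_le.mpr hxr0)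
          · exact le_csSup (hE.inter_right isClosed_Iic).bddAbove ⟨hl0E, hl0x.le⟩
        have hinfeq : sInf (E ∩ Ici x) = r0 := by
          apply le_antisymm
          · exact csInf_le (hE.inter_right isClosed_Ici).bddBelow ⟨hr0E, hxr0.le⟩
          · apply le_csInf (⟨r0, hr0E, hxr0.le⟩ : (E ∩ Ici x).Nonempty)
            rintro t ⟨ht, htx⟩
            rcases hdich t ht with h | h
            · exact absurd (le_trans (mem_Ici.mp htx) h) (not_le.mpr hl0x)
            · exact h
        refine ⟨x, ?_⟩
        rw [hgapval x hmx hxM hxE, hsupeq, hinfeq]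
        have hd1 : r0 - l0 ≠ 0 := by linarith
        have hd2 : ψ r0 - ψ l0 ≠ 0 := by linarith
        rw [hx]
        field_simp
        ring
  refine ⟨StrictMono.orderIsoOfSurjective _ hsm hsurj, ?_⟩
  intro x hx
  show extFun E ψ x = ψ x
  exact hval x hx

end Ext


/-! ### Ambient homeomorphism pieces -/

/-- The homeomorphism of the cube `(ℕ → Bool)` with the `n`-fold power. -/
noncomputable def cubeHomeo (n : ℕ) (hn : 0 < n) : (ℕ → Bool) ≃ₜ (Fin n → ℕ → Bool) where
  toFun f := fun i k => f (n * k + i)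
  invFun g := comb n hn g
  left_inv f := by
    funext m
    show f (n * (m / n) + (m % n)) = f m
    rw [Nat.div_add_mod]
  right_inv g := by
    funext i k
    show comb n hn g (n * k + i) = g i k
    have h1 : (⟨(n * k + (i:ℕ)) % n, Nat.mod_lt _ hn⟩ : Fin n) = i := by
      apply Fin.ext
      simp only
      rw [Nat.mul_add_mod, Nat.mod_eq_of_lt i.2]
    have h2 : (n * k + (i:ℕ)) / n = k := by
      rw [Nat.mul_add_div hn, Nat.div_eq_of_lt i.2, Nat.add_zero]
    simp only [comb]
    rw [h2, h1]
  continuous_toFun := continuous_pi fun _ => continuous_pi fun _ => continuous_apply _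
  continuous_invFun := by
    show Continuous fun g : Fin n → ℕ → Bool => comb n hn g
    exact continuous_pi fun m => (continuous_apply (m / n)).comp (continuous_apply _)

/-- Linear homeomorphism replacing coordinate `0` by the sum of all coordinates. -/
noncomputable def sumHomeo (n : ℕ) (hn : 0 < n) : (Fin n → ℝ) ≃ₜ (Fin n → ℝ) where
  toFun x := fun j => if j = ⟨0, hn⟩ then ∑ i, x i else x j
  invFun y := fun j => if j = ⟨0, hn⟩ then y ⟨0, hn⟩ - ∑ i ∈ Finset.univ.erase ⟨0, hn⟩, y i else y j
  left_inv x := by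
    funext j
    dsimp only
    by_cases hj : j = ⟨0, hn⟩
    · subst hj
      rw [if_pos rfl, if_pos rfl]
      have h1 : ∀ i ∈ Finset.univ.erase (⟨0, hn⟩ : Fin n),
          (if i = ⟨0, hn⟩ then ∑ i, x i else x i) = x i := by
        intro i hi
        rw [if_neg (Finset.ne_of_mem_erase hi)]
      rw [Finset.sum_congr rfl h1]
      have h2 := Finset.sum_erase_add Finset.univ x (Finset.mem_univ (⟨0, hn⟩ : Fin n))
      linarith
    · rw [if_neg hj, if_neg hj]
  right_inv y := by
    funext j
    dsimp only
    by_cases hj : j = ⟨0, hn⟩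
    · subst hj
      rw [if_pos rfl]
      rw [← Finset.sum_erase_add Finset.univ _ (Finset.mem_univ (⟨0, hn⟩ : Fin n))]
      have h1 : ∀ i ∈ Finset.univ.erase (⟨0, hn⟩ : Fin n),
          (if i = ⟨0, hn⟩ then y ⟨0, hn⟩ - ∑ i ∈ Finset.univ.erase ⟨0, hn⟩, y i else y i) = y i := by
        intro i hi
        rw [if_neg (Finset.ne_of_mem_erase hi)]
      rw [Finset.sum_congr rfl h1, if_pos rfl]
      ring
    · rw [if_neg hj, if_neg hj]
  continuous_toFun := by
    apply continuous_pi
    intro j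
    split_ifs with hj
    · exact continuous_finset_sum _ (fun i _ => continuous_apply i)
    · exact continuous_apply j
  continuous_invFun := by
    apply continuous_pi
    intro j
    split_ifs with hj
    · exact (continuous_apply _).sub (continuous_finset_sum _ (fun i _ => continuous_apply i))
    · exact continuous_apply j

/-- Shear homeomorphism subtracting a continuous function of coordinate `0` from the others. -/
noncomputable def shearHomeo (n : ℕ) (hn : 0 < n) (f : Fin n → C(ℝ, ℝ)) :
    (Fin n → ℝ) ≃ₜ (Fin n → ℝ) where
  toFun y := fun j => if j = ⟨0, hn⟩ then y ⟨0, hn⟩ else y j - f j (y ⟨0, hn⟩)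
  invFun w := fun j => if j = ⟨0, hn⟩ then w ⟨0, hn⟩ else w j + f j (w ⟨0, hn⟩)
  left_inv y := by
    funext j
    dsimp only
    by_cases hj : j = ⟨0, hn⟩
    · subst hj
      rw [if_pos rfl, if_pos rfl]
    · rw [if_neg hj, if_neg hj, if_pos rfl]
      ring
  right_inv w := by
    funext j
    dsimp only
    by_cases hj : j = ⟨0, hn⟩
    · subst hj
      rw [if_pos rfl, if_pos rfl]
    · rw [if_neg hj, if_neg hj, if_pos rfl]
      ring
  continuous_toFun := by
    apply continuous_pi
    intro j
    split_ifs with hj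
    · exact continuous_apply _
    · exact (continuous_apply _).sub ((f j).continuous.comp (continuous_apply _))
  continuous_invFun := by
    apply continuous_pi
    intro j
    split_ifs with hj
    · exact continuous_apply _
    · exact (continuous_apply _).add ((f j).continuous.comp (continuous_apply _))

lemma proj_nwd (Z : Set ℝ) (hZ : IsTotallyDisconnected Z) (D : Set ℝ) (hDZ : D ⊆ Z) :
    interior D = ∅ := by
  by_contra hc
  obtain ⟨y, hy⟩ := nonempty_iff_ne_empty.mpr hc
  obtain ⟨ε, hε, hball⟩ := Metric.mem_nhds_iff.mp (mem_interior_iff_mem_nhds.mp hy)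
  have hIcc : Icc y (y + ε/2) ⊆ Z := by
    intro t ht
    apply hDZ
    apply hball
    rw [Metric.mem_ball, Real.dist_eq, abs_lt]
    obtain ⟨h1, h2⟩ := ht
    constructor <;> linarith
  have hsub := hZ _ hIcc isPreconnected_Icc
  have h1 : y ∈ Icc y (y + ε/2) := ⟨le_refl _, by linarith⟩
  have h2 : y + ε/2 ∈ Icc y (y + ε/2) := ⟨by linarith, le_refl _⟩
  have := hsub h1 h2
  linarith


end Stmt19Aux

namespace Stmt19Aux

theorem exists_tame_superset {n : ℕ} (hn : 0 < n) (Z : Set ℝ) (hZ : IsTotallyDisconnected Z)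
    (K : Set (Fin n → ℝ)) (hK : IsCompact K) (hKZ : K ⊆ {x : Fin n → ℝ | ∀ i, x i ∈ Z}) :
    ∃ T : Set (Fin n → ℝ), IsTameCantorSet T ∧ K ⊆ T := by
  classical
  -- the projections of K
  have hDc : ∀ i : Fin n, IsCompact ((fun x : Fin n → ℝ => x i) '' K) :=
    fun i => hK.image (continuous_apply i)
  have hDnw : ∀ i : Fin n, interior ((fun x : Fin n → ℝ => x i) '' K) = ∅ := by
    intro i
    apply proj_nwd Z hZ
    rintro y ⟨x, hx, rfl⟩
    exact hKZ hx i
  -- coordinate embeddings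
  set e : Fin n → (ℕ → Bool) → ℝ := fun i => eD ((fun x : Fin n → ℝ => x i) '' K) with he
  have heinj : ∀ i, Function.Injective (e i) := fun i => eD_injective (hDnw i) (hDc i)
  have hecont : ∀ i, Continuous (e i) := fun i => eD_continuous (hDnw i) (hDc i)
  have hEc : ∀ i, IsCompact (range (e i)) := fun i => isCompact_range (hecont i)
  -- coordinate recoding maps
  set ψ : Fin n → ℝ → ℝ := fun i x => csp n i (Function.invFun (e i) x) with hψ
  have hψe : ∀ i a, ψ i (e i a) = csp n i a := by
    intro i a
    simp only [hψ]
    rw [Function.leftInverse_invFun (heinj i) a]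
  have hψmono : ∀ i, StrictMonoOn (ψ i) (range (e i)) := by
    intro i x hx y hy hxy
    obtain ⟨a, rfl⟩ := hx
    obtain ⟨b, rfl⟩ := hy
    rw [hψe i a, hψe i b]
    exact csp_lt_of_lexLt i.2 (lexLt_of_eD_lt (hDnw i) (hDc i) hxy)
  have hhomeo : ∀ i : Fin n, ∃ h : (ℕ → Bool) ≃ₜ (range (e i)), ∀ a, (h a : ℝ) = e i a := by
    intro i
    have hcont' : Continuous (fun a => (⟨e i a, mem_range_self a⟩ : range (e i))) :=
      Continuous.subtype_mk (hecont i) _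
    exact ⟨Continuous.homeoOfEquivCompactToT2 (f := Equiv.ofInjective (e i) (heinj i)) hcont',
      fun a => rfl⟩
  have hψcont : ∀ i, ContinuousOn (ψ i) (range (e i)) := by
    intro i
    obtain ⟨h, hh⟩ := hhomeo i
    rw [continuousOn_iff_continuous_restrict]
    have hre : (range (e i)).restrict (ψ i) = (csp n i) ∘ (⇑h.symm) := by
      funext x
      have h1 : (h (h.symm x) : ℝ) = e i (h.symm x) := hh _
      rw [h.apply_symm_apply] at h1
      show ψ i (x : ℝ) = csp n i (h.symm x)
      rw [h1, hψe]
    rw [show (range (e i)).domRestrict (ψ i) = (range (e i)).restrict (ψ i) from rfl, hre]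
    exact (continuous_csp n i).comp h.symm.continuous
  -- order iso extensions
  have hΦex : ∀ i : Fin n, ∃ Φ : ℝ ≃o ℝ, EqOn (⇑Φ) (ψ i) (range (e i)) :=
    fun i => exists_orderIso_ext (hEc i) (range_nonempty _) (hψmono i) (hψcont i)
  choose Φ hΦeq using hΦex
  have hΦe : ∀ i a, Φ i (e i a) = csp n i a := by
    intro i a
    rw [hΦeq i (mem_range_self a), hψe]
  -- the candidate set
  refine ⟨{x : Fin n → ℝ | ∀ i, x i ∈ range (e i)}, ⟨?_, ?_⟩, ?_⟩
  · -- Cantorness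
    have hmemT : ∀ a : Fin n → ℕ → Bool,
        (fun i => e i (a i)) ∈ {x : Fin n → ℝ | ∀ i, x i ∈ range (e i)} :=
      fun a i => mem_range_self _
    have hFbij : Function.Bijective (fun a : Fin n → ℕ → Bool =>
        (⟨fun i => e i (a i), hmemT a⟩ : {x : Fin n → ℝ | ∀ i, x i ∈ range (e i)})) := by
      constructor
      · intro a b hab
        have := congrArg Subtype.val hab
        funext i
        exact heinj i (congrFun this i)
      · rintro ⟨x, hx⟩
        have hx' : ∀ i, ∃ b, e i b = x i := hx
        choose a ha using hx'
        exact ⟨a, Subtype.ext (funext fun i => ha i)⟩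
    have hFcont : Continuous (fun a : Fin n → ℕ → Bool =>
        (⟨fun i => e i (a i), hmemT a⟩ : {x : Fin n → ℝ | ∀ i, x i ∈ range (e i)})) :=
      Continuous.subtype_mk (continuous_pi (fun i => (hecont i).comp (continuous_apply i))) _
    have hFT : (Fin n → ℕ → Bool) ≃ₜ {x : Fin n → ℝ | ∀ i, x i ∈ range (e i)} :=
      Continuous.homeoOfEquivCompactToT2 (f := Equiv.ofBijective _ hFbij) hFcont
    exact ⟨((cubeHomeo n hn).trans hFT).symm⟩
  · -- Tameness
    -- Tietze extensions
    have hScont : Continuous (fun a : Fin n → ℕ → Bool => ∑ i : Fin n, csp n i (a i)) :=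
      continuous_finset_sum _ (fun i _ => (continuous_csp n i).comp (continuous_apply i))
    have hSinj : Function.Injective (fun a : Fin n → ℕ → Bool => ∑ i : Fin n, csp n i (a i)) := by
      intro a b hab
      have hcc : cstd (comb n hn a) = cstd (comb n hn b) := by
        rw [← sum_csp n hn a, ← sum_csp n hn b]
        exact hab
      exact comb_injective n hn (cstd_injective hcc)
    have hQcl : IsClosed (range (fun a : Fin n → ℕ → Bool => ∑ i : Fin n, csp n i (a i))) :=
      (isCompact_range hScont).isClosed
    have hQhomeo : ∃ h : (Fin n → ℕ → Bool) ≃ₜ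
        (range (fun a : Fin n → ℕ → Bool => ∑ i : Fin n, csp n i (a i))),
        ∀ a, (h a : ℝ) = ∑ i : Fin n, csp n i (a i) :=
      ⟨Continuous.homeoOfEquivCompactToT2 (f := Equiv.ofInjective _ hSinj)
        (hScont.subtype_mk _), fun a => rfl⟩
    obtain ⟨hQ, hQa⟩ := hQhomeo
    have hfex : ∀ j : Fin n, ∃ g : C(ℝ, ℝ),
        ∀ a : Fin n → ℕ → Bool, g (∑ i : Fin n, csp n i (a i)) = csp n j (a j) := by
      intro j
      have hgc : Continuous (fun q : range (fun a : Fin n → ℕ → Bool => ∑ i : Fin n, csp n i (a i)) =>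
          csp n j ((hQ.symm q) j)) :=
        (continuous_csp n j).comp ((continuous_apply j).comp hQ.symm.continuous)
      obtain ⟨g, hg⟩ := ContinuousMap.exists_restrict_eq hQcl ⟨_, hgc⟩
      refine ⟨g, fun a => ?_⟩
      have h2 := ContinuousMap.congr_fun hg ⟨∑ i : Fin n, csp n i (a i), mem_range_self a⟩
      simp only [ContinuousMap.restrict_apply, ContinuousMap.coe_mk] at h2
      rw [h2]
      have h3 : hQ.symm ⟨∑ i : Fin n, csp n i (a i), mem_range_self a⟩ = a := by
        have h4 : hQ a = ⟨∑ i : Fin n, csp n i (a i), mem_range_self a⟩ :=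
          Subtype.ext (hQa a)
        rw [← h4, Homeomorph.symm_apply_apply]
      rw [h3]
    choose f hf using hfex
    refine ⟨((Homeomorph.piCongrRight (fun i => (Φ i).toHomeomorph)).trans (sumHomeo n hn)).trans
      (shearHomeo n hn f), ?_⟩
    rintro y ⟨x, hxT, rfl⟩
    choose a ha using hxT
    intro i hi
    have hi0 : i ≠ ⟨0, hn⟩ := by
      intro hc
      rw [hc] at hi
      simp at hi
    -- compute the image coordinatewise
    have h1 : ∀ j, (Homeomorph.piCongrRight (fun i => (Φ i).toHomeomorph)) x j = csp n j (a j) := by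
      intro j
      show Φ j (x j) = _
      rw [← ha j, hΦe]
    have h2 : ∀ j, (sumHomeo n hn) ((Homeomorph.piCongrRight (fun i => (Φ i).toHomeomorph)) x) j
        = if j = ⟨0, hn⟩ then ∑ i : Fin n, csp n i (a i) else csp n j (a j) := by
      intro j
      show (if j = ⟨0, hn⟩ then ∑ i, (Homeomorph.piCongrRight (fun i => (Φ i).toHomeomorph)) x i
        else (Homeomorph.piCongrRight (fun i => (Φ i).toHomeomorph)) x j) = _
      by_cases hj : j = ⟨0, hn⟩
      · rw [if_pos hj, if_pos hj]
        exact Finset.sum_congr rfl (fun i _ => h1 i)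
      · rw [if_neg hj, if_neg hj, h1]
    show (shearHomeo n hn f) ((sumHomeo n hn) ((Homeomorph.piCongrRight (fun i => (Φ i).toHomeomorph)) x)) i = 0
    show (if i = ⟨0, hn⟩ then _ else _) = 0
    rw [if_neg hi0, h2 i, h2 ⟨0, hn⟩, if_neg hi0, if_pos rfl, hf i a]
    ring
  · -- K ⊆ T
    intro x hx i
    exact subset_range_eD (hDnw i) (hDc i) ⟨x, hx, rfl⟩

end Stmt19Aux


/-- For any zero-dimensional (totally disconnected) `Z ⊆ ℝ` we have
`σK(Zⁿ) ⊆ σC₀`: every subset of `Zⁿ` contained in a countable union of compact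
subsets of `Zⁿ` belongs to `σC₀`. -/
theorem stmt19 (n : ℕ) (hn : 1 ≤ n) (Z : Set ℝ) (hZ : IsTotallyDisconnected Z)
    (A : Set (Fin n → ℝ)) (hAZ : A ⊆ {x : Fin n → ℝ | ∀ i, x i ∈ Z})
    (hK : ∃ K : ℕ → Set (Fin n → ℝ),
      (∀ k, IsCompact (K k) ∧ K k ⊆ {x : Fin n → ℝ | ∀ i, x i ∈ Z}) ∧
      A ⊆ ⋃ k, K k) :
    A ∈ sigmaC0 n := by
  obtain ⟨K, hKp, hKcov⟩ := hK
  choose T hT1 hT2 using fun k =>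
    Stmt19Aux.exists_tame_superset (show 0 < n from hn) Z hZ (K k) (hKp k).1 (hKp k).2
  exact ⟨T, hT1, hKcov.trans (Set.iUnion_mono hT2)⟩
end Stmt19Aux
end
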